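/- arXiv:2504.09569 — 6 statements merged into one kernel-verified Lean document; each statement's English description precedes it below -/
import Mathlib

section
/- The left q-difference operators satisfy the Weyl relations: xᵢᴸ ∂ⱼᴸ − q⁻¹ ∂ⱼᴸ xᵢᴸ = 0 for i < j, and xᵢᴸ ∂ᵢᴸ − q⁻¹ ∂ᵢᴸ xᵢᴸ = −q⁻¹ γᵢ⁻¹. -/
noncomputable section

/-- Multi-indices for `n` q-commuting variables. -/
abbrev QIdx (n : ℕ) := Fin n →₀ ℕ

/-- A polynomial in the q-commutative algebra `A = ℂ⟨x₁,…,xₙ⟩/(xᵢxⱼ - q xⱼxᵢ, i<j)`,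
represented by its coefficient function with respect to the ordered monomial basis
`x^α = x₁^{α₁}⋯xₙ^{αₙ}`. -/
abbrev QPoly (n : ℕ) := QIdx n → ℂ

/-- The symmetric q-number `[m]_q = (q^m - q^{-m})/(q - q⁻¹)` (as a complex scalar). -/
def qNum (q : ℝ) (m : ℤ) : ℂ := ((q : ℂ) ^ m - (q : ℂ) ^ (-m)) / ((q : ℂ) - (q : ℂ)⁻¹)

/-- `∑_{j<i} αⱼ`. -/
def lowSum {n : ℕ} (i : Fin n) (α : QIdx n) : ℤ := ∑ j, if j < i then (α j : ℤ) else 0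

/-- `∑_{j>i} αⱼ`. -/
def highSum {n : ℕ} (i : Fin n) (α : QIdx n) : ℤ := ∑ j, if i < j then (α j : ℤ) else 0

/-- `∑_j αⱼ`, the total degree. -/
def totSum {n : ℕ} (α : QIdx n) : ℤ := ∑ j, (α j : ℤ)

/-- The dilation operator `γᵢ : xᵢ ↦ q·xᵢ`; on monomials `γᵢ x^α = q^{αᵢ} x^α`. -/
def gam {n : ℕ} (q : ℝ) (i : Fin n) (f : QPoly n) : QPoly n :=
  fun α => (q : ℂ) ^ (α i : ℤ) * f α

/-- The inverse dilation `γᵢ⁻¹`. -/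
def gamInv {n : ℕ} (q : ℝ) (i : Fin n) (f : QPoly n) : QPoly n :=
  fun α => (q : ℂ) ^ (-(α i : ℤ)) * f α

/-- The total dilation `γ = γ₁⋯γₙ`. -/
def gamAll {n : ℕ} (q : ℝ) (f : QPoly n) : QPoly n :=
  fun α => (q : ℂ) ^ totSum α * f α

/-- The inverse total dilation `γ⁻¹`. -/
def gamAllInv {n : ℕ} (q : ℝ) (f : QPoly n) : QPoly n :=
  fun α => (q : ℂ) ^ (-totSum α) * f α

/-- `ωᵢ = γ₁⁻¹⋯γ_{i-1}⁻¹ γ_{i+1}⋯γₙ`; on monomials it multiplies by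
`q^{∑_{j>i} αⱼ - ∑_{j<i} αⱼ}`. -/
def omegaOp {n : ℕ} (q : ℝ) (i : Fin n) (f : QPoly n) : QPoly n :=
  fun α => (q : ℂ) ^ (highSum i α - lowSum i α) * f α

/-- `ωᵢ⁻¹ = γ₁⋯γ_{i-1} γ_{i+1}⁻¹⋯γₙ⁻¹`. -/
def omegaInvOp {n : ℕ} (q : ℝ) (i : Fin n) (f : QPoly n) : QPoly n :=
  fun α => (q : ℂ) ^ (lowSum i α - highSum i α) * f α

/-- Left multiplication by `xᵢ`:  `xᵢ · x^β = q^{-∑_{j<i} βⱼ} x^{β+δᵢ}` in `A`. -/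
def xL {n : ℕ} (q : ℝ) (i : Fin n) (f : QPoly n) : QPoly n :=
  fun α => if α i = 0 then 0 else
    (q : ℂ) ^ (-(lowSum i α)) * f (α - Finsupp.single i 1)

/-- Right multiplication by `xᵢ`:  `x^β · xᵢ = q^{-∑_{j>i} βⱼ} x^{β+δᵢ}` in `A`. -/
def xR {n : ℕ} (q : ℝ) (i : Fin n) (f : QPoly n) : QPoly n :=
  fun α => if α i = 0 then 0 else
    (q : ℂ) ^ (-(highSum i α)) * f (α - Finsupp.single i 1)

/-- The left partial q-difference operator `∂ᵢᴸ = (xᵢᴸ)⁻¹(γᵢ - γᵢ⁻¹)/(q - q⁻¹)`;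
on monomials `∂ᵢᴸ x^α = [αᵢ]_q q^{∑_{j<i} αⱼ} x^{α-δᵢ}`. -/
def dL {n : ℕ} (q : ℝ) (i : Fin n) (f : QPoly n) : QPoly n :=
  fun α => qNum q (α i + 1) * (q : ℂ) ^ lowSum i α * f (α + Finsupp.single i 1)

/-- The right partial q-difference operator `∂ᵢᴿ = (xᵢᴿ)⁻¹(γᵢ - γᵢ⁻¹)/(q - q⁻¹)`;
on monomials `∂ᵢᴿ x^α = [αᵢ]_q q^{∑_{j>i} αⱼ} x^{α-δᵢ}`. -/
def dR {n : ℕ} (q : ℝ) (i : Fin n) (f : QPoly n) : QPoly n :=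
  fun α => qNum q (α i + 1) * (q : ℂ) ^ highSum i α * f (α + Finsupp.single i 1)

/-- The q-power picked up when reordering `x^α · x^β = q^(qExp α β) x^{α+β}`,
namely `qExp α β = -∑_{i>j} αᵢ βⱼ`. -/
def qExp {n : ℕ} (α β : QIdx n) : ℤ :=
  -∑ i, ∑ j, if j < i then (α i : ℤ) * (β j : ℤ) else 0

/-- Multiplication in the q-commutative algebra `A`, in coefficient form. -/
def qMul {n : ℕ} (q : ℝ) (f g : QPoly n) : QPoly n :=
  fun α => ∑ p ∈ Finset.HasAntidiagonal.antidiagonal α, (q : ℂ) ^ qExp p.1 p.2 * f p.1 * g p.2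

/-- The unit of `A`. -/
def qOne {n : ℕ} : QPoly n := fun α => if α = 0 then 1 else 0

/-- Powers in `A`. -/
def qPow {n : ℕ} (q : ℝ) (f : QPoly n) : ℕ → QPoly n
  | 0 => qOne
  | m + 1 => qMul q f (qPow q f m)

/-- The monomial `x^α` as an element of `A`. -/
def mono {n : ℕ} (α : QIdx n) : QPoly n := fun β => if β = α then 1 else 0

/-- The variable `xᵢ` as an element of `A`. -/
def Xvar {n : ℕ} (i : Fin n) : QPoly n := mono (Finsupp.single i 1)

/-- The Q-radius `Q = x₁² + q⁻¹ x₂² + … + q^{-n+1} xₙ²` as an element of `A`. -/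
def Qradius {n : ℕ} (q : ℝ) : QPoly n :=
  ∑ i : Fin n, (q : ℂ) ^ (-((i : ℕ) : ℤ)) • qMul q (Xvar i) (Xvar i)

/-- The operator `Q̂ᴸ = ∑ᵢ q^{-i+1}(xᵢᴸ)²` of left multiplication by the Q-radius. -/
def QhatL {n : ℕ} (q : ℝ) (f : QPoly n) : QPoly n :=
  ∑ i : Fin n, (q : ℂ) ^ (-((i : ℕ) : ℤ)) • xL q i (xL q i f)

/-- The `U_q(o)`-invariant q-Laplacian `Δ_qᴿ = ∑ᵢ q^{n-i}(∂ᵢᴿ)²`. -/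
def qLap {n : ℕ} (q : ℝ) (f : QPoly n) : QPoly n :=
  ∑ i : Fin n, (q : ℂ) ^ ((n : ℤ) - 1 - ((i : ℕ) : ℤ)) • dR q i (dR q i f)


/-- `√q` as a complex scalar. -/
def sqC (q : ℝ) : ℂ := Complex.ofReal (Real.sqrt q)

section aux

variable {n : ℕ}

lemma lowSum_add_single (i j : Fin n) (hij : i ≤ j) (α : QIdx n) :
    lowSum i (α + Finsupp.single j 1) = lowSum i α := by
  unfold lowSum
  refine Finset.sum_congr rfl fun k _ => ?_
  by_cases hk : k < i
  · simp [hk, Finsupp.single_apply, (hk.trans_le hij).ne']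
  · simp [hk]

lemma lowSum_sub_single_self (i : Fin n) (α : QIdx n) :
    lowSum i (α - Finsupp.single i 1) = lowSum i α := by
  unfold lowSum
  refine Finset.sum_congr rfl fun k _ => ?_
  by_cases hk : k < i
  · simp [hk, Finsupp.tsub_apply, Finsupp.single_apply, hk.ne']
  · simp [hk]

lemma lowSum_sub_single_lt (i j : Fin n) (hij : i < j) (α : QIdx n) (hα : α i ≠ 0) :
    lowSum j (α - Finsupp.single i 1) = lowSum j α - 1 := by
  unfold lowSum
  have : ∀ k ∈ (Finset.univ : Finset (Fin n)),
      (if k < j then (((α - Finsupp.single i 1 : QIdx n) k : ℕ) : ℤ) else 0)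
        = (if k < j then (α k : ℤ) else 0) - (if k = i then 1 else 0) := by
    intro k _
    by_cases hk : k = i
    · subst hk
      have h1 : (1 : ℕ) ≤ α k := Nat.one_le_iff_ne_zero.mpr hα
      simp [hij, Finsupp.tsub_apply, Finsupp.single_apply, Nat.cast_sub h1]
    · simp [Finsupp.tsub_apply, Finsupp.single_apply, hk, Ne.symm hk]
  rw [Finset.sum_congr rfl this, Finset.sum_sub_distrib]
  simp

lemma qidx_sub_add_comm (i j : Fin n) (hij : i ≠ j) (α : QIdx n) (hα : α i ≠ 0) :
    α + Finsupp.single j 1 - Finsupp.single i 1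
      = α - Finsupp.single i 1 + Finsupp.single j 1 := by
  ext k
  by_cases hk : k = i
  · subst hk
    simp only [Finsupp.tsub_apply, Finsupp.add_apply, Finsupp.single_apply,
      if_neg (Ne.symm hij)]
    omega
  · simp [Finsupp.tsub_apply, Finsupp.add_apply, Finsupp.single_apply, Ne.symm hk]

lemma qidx_sub_add_cancel (i : Fin n) (α : QIdx n) (hα : α i ≠ 0) :
    α - Finsupp.single i 1 + Finsupp.single i 1 = α := by
  ext k
  by_cases hk : k = i
  · subst hk
    have h1 : 1 ≤ α k := Nat.one_le_iff_ne_zero.mpr hα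
    simp [Finsupp.tsub_apply, Finsupp.single_apply, Nat.sub_add_cancel h1]
  · simp [Finsupp.tsub_apply, Finsupp.add_apply, Finsupp.single_apply, Ne.symm hk]

lemma qidx_add_sub_cancel (i : Fin n) (α : QIdx n) :
    α + Finsupp.single i 1 - Finsupp.single i 1 = α := by
  ext k
  by_cases hk : k = i
  · subst hk
    simp [Finsupp.tsub_apply, Finsupp.add_apply, Finsupp.single_apply]
  · simp [Finsupp.tsub_apply, Finsupp.add_apply, Finsupp.single_apply, Ne.symm hk]

lemma qNum_key (q : ℝ) (hq : 0 < q) (hq1 : q ≠ 1) (m : ℤ) :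
    qNum q m - (q : ℂ)⁻¹ * qNum q (m + 1) = -((q : ℂ)⁻¹ * (q : ℂ) ^ (-m)) := by
  have hc : (q : ℂ) ≠ 0 := by
    exact_mod_cast hq.ne'
  have hdR : q - q⁻¹ ≠ 0 := by
    intro h
    have hq0 : q ≠ 0 := hq.ne'
    have : q * q = 1 := by
      field_simp at h
      nlinarith [h]
    have : (q - 1) * (q + 1) = 0 := by ring_nf; nlinarith [this]
    rcases mul_eq_zero.mp this with h1 | h2
    · exact hq1 (by linarith)
    · linarith
  have hd : (q : ℂ) - (q : ℂ)⁻¹ ≠ 0 := by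
    rw [show (q : ℂ)⁻¹ = ((q⁻¹ : ℝ) : ℂ) by push_cast; ring,
      ← Complex.ofReal_sub]
    exact_mod_cast hdR
  have hab : (q : ℂ) ^ m * (q : ℂ) ^ (-m) = 1 := by
    rw [← zpow_add₀ hc]; simp
  have h1 : (q : ℂ) ^ (m + 1) = (q : ℂ) ^ m * q := zpow_add_one₀ hc m
  have h2 : (q : ℂ) ^ (-(m + 1)) = (q : ℂ) ^ (-m) * (q : ℂ)⁻¹ := by
    rw [neg_add, zpow_add₀ hc, zpow_neg_one]
  have hcc : (q : ℂ)⁻¹ * (q : ℂ) = 1 := inv_mul_cancel₀ hc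
  have key : ((q : ℂ) ^ m - (q : ℂ) ^ (-m))
      - (q : ℂ)⁻¹ * ((q : ℂ) ^ m * q - (q : ℂ) ^ (-m) * (q : ℂ)⁻¹)
      = -((q : ℂ)⁻¹ * (q : ℂ) ^ (-m)) * ((q : ℂ) - (q : ℂ)⁻¹) := by
    linear_combination ((q : ℂ) ^ (-m) - (q : ℂ) ^ m) * hcc
  unfold qNum
  rw [h1, h2, mul_div_assoc' ((q : ℂ)⁻¹), div_sub_div_same, div_eq_iff hd]
  exact key

end aux

/-- Left Weyl relations:
`xᵢᴸ ∂ⱼᴸ - q⁻¹ ∂ⱼᴸ xᵢᴸ = 0` for `i < j` and `xᵢᴸ ∂ᵢᴸ - q⁻¹ ∂ᵢᴸ xᵢᴸ = -q⁻¹ γᵢ⁻¹`. -/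
theorem left_weyl_relations (n : ℕ) (q : ℝ) (hq : 0 < q) (hq1 : q ≠ 1)
    (i j : Fin n) (hij : i < j) :
    (∀ f : QPoly n, xL q i (dL q j f) - (q : ℂ)⁻¹ • dL q j (xL q i f) = 0) ∧
    (∀ f : QPoly n, xL q i (dL q i f) - (q : ℂ)⁻¹ • dL q i (xL q i f)
        = -((q : ℂ)⁻¹ • gamInv q i f)) := by
  have hc : (q : ℂ) ≠ 0 := by exact_mod_cast hq.ne'
  constructor
  · intro f
    funext α
    simp only [Pi.sub_apply, Pi.smul_apply, Pi.zero_apply, smul_eq_mul]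
    unfold xL dL
    beta_reduce
    have hji : (α + Finsupp.single j 1 : QIdx n) i = α i := by
      simp [Finsupp.single_apply, (Ne.symm hij.ne)]
    by_cases h0 : α i = 0
    · simp [h0, Finsupp.add_apply, Finsupp.single_apply, hij.ne']
    · rw [if_neg h0, hji, if_neg h0]
      have e1 : (α - Finsupp.single i 1 : QIdx n) j = α j := by
        simp [Finsupp.tsub_apply, Finsupp.single_apply, hij.ne]
      have e2 := lowSum_sub_single_lt i j hij α h0
      have e3 := lowSum_add_single i j hij.le α
      have e4 := qidx_sub_add_comm i j hij.ne α h0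
      rw [e1, e2, e3, ← e4]
      rw [zpow_sub_one₀ hc]
      ring
  · intro f
    funext α
    simp only [Pi.sub_apply, Pi.smul_apply, Pi.neg_apply, smul_eq_mul]
    unfold xL dL gamInv
    beta_reduce
    have hii : (α + Finsupp.single i 1 : QIdx n) i = α i + 1 := by
      simp [Finsupp.single_apply]
    have hne : (α + Finsupp.single i 1 : QIdx n) i ≠ 0 := by omega
    rw [if_neg hne, lowSum_add_single i i le_rfl α, qidx_add_sub_cancel i α]
    by_cases h0 : α i = 0
    · rw [if_pos h0]
      have key := qNum_key q hq hq1 (α i : ℤ)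
      have hq0 : qNum q (α i : ℤ) = 0 := by
        rw [h0]; unfold qNum; norm_num
      have hpow : (q : ℂ) ^ lowSum i α * (q : ℂ) ^ (-lowSum i α) = 1 := by
        rw [← zpow_add₀ hc]; simp
      linear_combination f α * ((q : ℂ) ^ lowSum i α * (q : ℂ) ^ (-lowSum i α)) * key
        - f α * ((q : ℂ) ^ lowSum i α * (q : ℂ) ^ (-lowSum i α)) * hq0
        - f α * (q : ℂ)⁻¹ * (q : ℂ) ^ (-(α i : ℤ)) * hpow
    · rw [if_neg h0]
      have e1 : (α - Finsupp.single i 1 : QIdx n) i = α i - 1 := by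
        simp [Finsupp.tsub_apply, Finsupp.single_apply]
      have e2 := lowSum_sub_single_self i α
      have e3 := qidx_sub_add_cancel i α h0
      rw [e1, e2, e3]
      have hcast : ((α i - 1 : ℕ) : ℤ) + 1 = (α i : ℤ) := by
        have : 1 ≤ α i := Nat.one_le_iff_ne_zero.mpr h0
        omega
      rw [hcast]
      have key := qNum_key q hq hq1 (α i : ℤ)
      have hpow : (q : ℂ) ^ lowSum i α * (q : ℂ) ^ (-lowSum i α) = 1 := by
        rw [← zpow_add₀ hc]; simp
      linear_combination f α * ((q : ℂ) ^ lowSum i α * (q : ℂ) ^ (-lowSum i α)) * key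
        - f α * (q : ℂ)⁻¹ * (q : ℂ) ^ (-(α i : ℤ)) * hpow
end
end

section
/- The commutator of the q-Laplacian with the k-th power of the left Q-radius multiplication operator is Δ_qᴿ (Q̂ᴸ)^k − (Q̂ᴸ)^k Δ_qᴿ = (Q̂ᴸ)^{k−1} [2k]_q {q^{2k+n−2} γ²}_q, where for an operator a, {a}_q = (a − a⁻¹)/(q − q⁻¹), and γ = γ₁⋯γₙ. -/
noncomputable section

namespace QAux

variable {n : ℕ} {q : ℝ}

lemma hQ0 (hq : 0 < q) : (q : ℂ) ≠ 0 := by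
  exact_mod_cast ne_of_gt hq

lemma hden (hq : 0 < q) (hq1 : q ≠ 1) : (q : ℂ) - (q : ℂ)⁻¹ ≠ 0 := by
  have hq0 : q ≠ 0 := ne_of_gt hq
  have h : q - q⁻¹ ≠ 0 := by
    intro h
    apply hq1
    have h2 : q * q = 1 := by
      field_simp at h
      nlinarith [h]
    nlinarith [sq_nonneg (q - 1), sq_nonneg (q + 1)]
  rw [← Complex.ofReal_inv, ← Complex.ofReal_sub]
  exact_mod_cast h

lemma sub_add_single_cancel {α : QIdx n} {i : Fin n} {m : ℕ} (h : m ≤ α i) :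
    α - Finsupp.single i m + Finsupp.single i m = α := by
  ext j
  by_cases hj : j = i
  · subst hj; simp [Finsupp.tsub_apply, Nat.sub_add_cancel h]
  · simp [Finsupp.tsub_apply, Finsupp.single_apply, Ne.symm hj]

lemma add_single_sub_cancel (α : QIdx n) (i : Fin n) (m : ℕ) :
    α + Finsupp.single i m - Finsupp.single i m = α := by
  ext j
  by_cases hj : j = i
  · subst hj; simp [Finsupp.tsub_apply]
  · simp [Finsupp.tsub_apply, Finsupp.single_apply, Ne.symm hj]

lemma add_single_single (α : QIdx n) (i : Fin n) :
    α + Finsupp.single i 1 + Finsupp.single i 1 = α + Finsupp.single i 2 := by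
  ext j
  by_cases hj : j = i
  · subst hj; simp [Finsupp.single_apply]
  · simp [Finsupp.single_apply, Ne.symm hj]

lemma sub_single_single (α : QIdx n) (i : Fin n) :
    α - Finsupp.single i 1 - Finsupp.single i 1 = α - Finsupp.single i 2 := by
  ext j
  by_cases hj : j = i
  · subst hj; simp [Finsupp.tsub_apply, Finsupp.single_apply]; omega
  · simp [Finsupp.tsub_apply, Finsupp.single_apply, Ne.symm hj]

lemma sum_if_single (p : Fin n → Prop) [DecidablePred p] (i : Fin n) (m : ℕ) :
    (∑ j : Fin n, if p j then (((Finsupp.single i m : QIdx n) j : ℕ) : ℤ) else 0)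
      = if p i then (m : ℤ) else 0 := by
  rw [Finset.sum_eq_single i]
  · simp [Finsupp.single_apply]
  · intro b _ hb
    simp [Finsupp.single_apply, Ne.symm hb]
  · intro h; exact absurd (Finset.mem_univ i) h

lemma sum_if_add (p : Fin n → Prop) [DecidablePred p] (α β : QIdx n) :
    (∑ j : Fin n, if p j then (((α + β) j : ℕ) : ℤ) else 0)
      = (∑ j : Fin n, if p j then ((α j : ℕ) : ℤ) else 0)
        + (∑ j : Fin n, if p j then ((β j : ℕ) : ℤ) else 0) := by
  rw [← Finset.sum_add_distrib]
  refine Finset.sum_congr rfl fun j _ => ?_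
  by_cases h : p j <;> simp [h, Finsupp.add_apply]

lemma lowSum_add_single (i j : Fin n) (α : QIdx n) (m : ℕ) :
    lowSum j (α + Finsupp.single i m) = lowSum j α + if i < j then (m : ℤ) else 0 := by
  unfold lowSum
  rw [sum_if_add (fun j' => j' < j) α (Finsupp.single i m),
    sum_if_single (fun j' => j' < j) i m]

lemma highSum_add_single (i j : Fin n) (α : QIdx n) (m : ℕ) :
    highSum j (α + Finsupp.single i m) = highSum j α + if j < i then (m : ℤ) else 0 := by
  unfold highSum
  rw [sum_if_add (fun j' => j < j') α (Finsupp.single i m),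
    sum_if_single (fun j' => j < j') i m]

lemma totSum_add_single (i : Fin n) (α : QIdx n) (m : ℕ) :
    totSum (α + Finsupp.single i m) = totSum α + m := by
  unfold totSum
  have h1 : (∑ j : Fin n, (((α + Finsupp.single i m) j : ℕ) : ℤ))
      = (∑ j : Fin n, if True then (((α + Finsupp.single i m) j : ℕ) : ℤ) else 0) := by simp
  have h2 := sum_if_add (fun _ => True) α (Finsupp.single i m)
  have h3 := sum_if_single (fun _ : Fin n => True) i m
  simp only [if_true] at h2 h3
  rw [h1]; simp only [if_true]; rw [h2, h3]

lemma lowSum_sub_single {i : Fin n} (j : Fin n) {α : QIdx n} {m : ℕ} (h : m ≤ α i) :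
    lowSum j (α - Finsupp.single i m) = lowSum j α - if i < j then (m : ℤ) else 0 := by
  have h2 := lowSum_add_single i j (α - Finsupp.single i m) m
  rw [sub_add_single_cancel h] at h2
  omega

lemma highSum_sub_single {i : Fin n} (j : Fin n) {α : QIdx n} {m : ℕ} (h : m ≤ α i) :
    highSum j (α - Finsupp.single i m) = highSum j α - if j < i then (m : ℤ) else 0 := by
  have h2 := highSum_add_single i j (α - Finsupp.single i m) m
  rw [sub_add_single_cancel h] at h2
  omega

lemma totSum_sub_single {i : Fin n} {α : QIdx n} {m : ℕ} (h : m ≤ α i) :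
    totSum (α - Finsupp.single i m) = totSum α - m := by
  have h2 := totSum_add_single i (α - Finsupp.single i m) m
  rw [sub_add_single_cancel h] at h2
  omega

lemma hs_ls_tot (i : Fin n) (α : QIdx n) :
    highSum i α + (α i : ℤ) + lowSum i α = totSum α := by
  unfold highSum lowSum totSum
  have hαi : (α i : ℤ) = ∑ j : Fin n, if j = i then (α j : ℤ) else 0 := by
    rw [Finset.sum_ite_eq' Finset.univ i (fun j => (α j : ℤ))]
    simp
  rw [hαi, ← Finset.sum_add_distrib, ← Finset.sum_add_distrib]
  refine Finset.sum_congr rfl fun j _ => ?_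
  rcases lt_trichotomy j i with h | h | h
  · simp [h, asymm h, h.ne]
  · simp [h, lt_irrefl]
  · simp [h, asymm h, h.ne']

end QAux

namespace QAux

variable {n : ℕ} {q : ℝ}

lemma qNum_zero : qNum q 0 = 0 := by simp [qNum]

lemma dR_sum {ι : Type*} (s : Finset ι) (g : ι → QPoly n) (i : Fin n) :
    dR q i (∑ a ∈ s, g a) = ∑ a ∈ s, dR q i (g a) := by
  funext α
  simp [dR, Finset.sum_apply, Finset.mul_sum]

lemma dR_smul (i : Fin n) (c : ℂ) (f : QPoly n) :
    dR q i (c • f) = c • dR q i f := by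
  funext α; simp [dR]; ring

lemma dR_add (i : Fin n) (f g : QPoly n) :
    dR q i (f + g) = dR q i f + dR q i g := by
  funext α; simp [dR]; ring

lemma dR_sub (i : Fin n) (f g : QPoly n) :
    dR q i (f - g) = dR q i f - dR q i g := by
  funext α; simp [dR]; ring

lemma xL_sum {ι : Type*} (s : Finset ι) (g : ι → QPoly n) (i : Fin n) :
    xL q i (∑ a ∈ s, g a) = ∑ a ∈ s, xL q i (g a) := by
  funext α
  by_cases h : α i = 0 <;> simp [xL, h, Finset.sum_apply, Finset.mul_sum]

lemma xL_smul (i : Fin n) (c : ℂ) (f : QPoly n) :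
    xL q i (c • f) = c • xL q i f := by
  funext α; by_cases h : α i = 0 <;> simp [xL, h] <;> ring

lemma xL_add (i : Fin n) (f g : QPoly n) :
    xL q i (f + g) = xL q i f + xL q i g := by
  funext α; by_cases h : α i = 0 <;> simp [xL, h] <;> ring

lemma xL_sub (i : Fin n) (f g : QPoly n) :
    xL q i (f - g) = xL q i f - xL q i g := by
  funext α; by_cases h : α i = 0 <;> simp [xL, h] <;> ring

lemma QhatL_smul (c : ℂ) (f : QPoly n) :
    QhatL q (c • f) = c • QhatL q f := by
  unfold QhatL
  rw [Finset.smul_sum]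
  refine Finset.sum_congr rfl fun i _ => ?_
  rw [xL_smul, xL_smul, smul_comm]

lemma QhatL_add (f g : QPoly n) :
    QhatL q (f + g) = QhatL q f + QhatL q g := by
  unfold QhatL
  rw [← Finset.sum_add_distrib]
  refine Finset.sum_congr rfl fun i _ => ?_
  rw [xL_add, xL_add, smul_add]

lemma QhatL_sub (f g : QPoly n) :
    QhatL q (f - g) = QhatL q f - QhatL q g := by
  unfold QhatL
  rw [← Finset.sum_sub_distrib]
  refine Finset.sum_congr rfl fun i _ => ?_
  rw [xL_sub, xL_sub, smul_sub]

lemma iter_smul (m : ℕ) (c : ℂ) (f : QPoly n) :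
    (QhatL q)^[m] (c • f) = c • (QhatL q)^[m] f := by
  induction m generalizing f with
  | zero => simp
  | succ m ih => rw [Function.iterate_succ_apply, QhatL_smul, ih,
      Function.iterate_succ_apply]

lemma iter_add (m : ℕ) (f g : QPoly n) :
    (QhatL q)^[m] (f + g) = (QhatL q)^[m] f + (QhatL q)^[m] g := by
  induction m generalizing f g with
  | zero => simp
  | succ m ih => rw [Function.iterate_succ_apply, QhatL_add, ih,
      Function.iterate_succ_apply, Function.iterate_succ_apply]

lemma X2_apply (i : Fin n) (f : QPoly n) (α : QIdx n) :
    xL q i (xL q i f) α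
      = if α i < 2 then 0
        else (q : ℂ) ^ (-lowSum i α) * ((q : ℂ) ^ (-lowSum i α) * f (α - Finsupp.single i 2)) := by
  unfold xL
  by_cases h0 : α i = 0
  · simp [h0]
  · by_cases h1 : α i = 1
    · have e1 : (α - Finsupp.single i 1 : QIdx n) i = 0 := by
        simp [Finsupp.tsub_apply, h1]
      rw [if_neg h0, e1, if_pos rfl]
      simp [h1]
    · have h2 : 2 ≤ α i := by omega
      have e1 : (α - Finsupp.single i 1 : QIdx n) i = α i - 1 := by
        simp [Finsupp.tsub_apply]
      have e2 : (α - Finsupp.single i 1 : QIdx n) i ≠ 0 := by omega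
      rw [if_neg h0, if_neg e2, if_neg (by omega : ¬ α i < 2)]
      rw [lowSum_sub_single i (by omega : 1 ≤ α i)]
      rw [sub_single_single]
      simp [lt_irrefl]

lemma D2_apply (i : Fin n) (f : QPoly n) (α : QIdx n) :
    dR q i (dR q i f) α
      = qNum q (α i + 1) * (q : ℂ) ^ highSum i α
          * (qNum q (α i + 2) * (q : ℂ) ^ highSum i α * f (α + Finsupp.single i 2)) := by
  unfold dR
  have e1 : ((α + Finsupp.single i 1 : QIdx n) i : ℤ) = (α i : ℤ) + 1 := by
    simp [Finsupp.add_apply]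
  have e2 : highSum i (α + Finsupp.single i 1) = highSum i α := by
    rw [highSum_add_single]; simp [lt_irrefl]
  rw [e2, add_single_single]
  congr 2
  rw [e1]; ring

lemma dR_xL_comm (hq : 0 < q) {i j : Fin n} (hij : i ≠ j) (f : QPoly n) :
    dR q i (xL q j f) = xL q j (dR q i f) := by
  have hQ := hQ0 hq
  funext α
  unfold dR xL
  dsimp only
  by_cases h0 : α j = 0
  · have e1 : (α + Finsupp.single i 1 : QIdx n) j = 0 := by
      simp [Finsupp.add_apply, Finsupp.single_apply, hij, h0]
    simp [h0, e1]
  · have h0' : 1 ≤ α j := by omega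
    have e1 : (α + Finsupp.single i 1 : QIdx n) j = α j := by
      simp [Finsupp.add_apply, Finsupp.single_apply, hij]
    rw [e1, if_neg h0, if_neg h0]
    have e2 : ((α - Finsupp.single j 1 : QIdx n) i : ℤ) = (α i : ℤ) := by
      simp [Finsupp.tsub_apply, Finsupp.single_apply, Ne.symm hij]
    have e3 : α + Finsupp.single i 1 - Finsupp.single j 1
        = α - Finsupp.single j 1 + Finsupp.single i 1 := by
      ext j'
      by_cases hji : j = j' <;> by_cases hii : i = j' <;>
        simp [Finsupp.tsub_apply, Finsupp.add_apply, Finsupp.single_apply, hji, hii] <;>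
        omega
    have e4 : lowSum j (α + Finsupp.single i 1) = lowSum j α + if i < j then (1 : ℤ) else 0 := by
      rw [lowSum_add_single]; norm_num
    have e5 : highSum i (α - Finsupp.single j 1) = highSum i α - if i < j then (1 : ℤ) else 0 := by
      rw [highSum_sub_single i h0']; norm_num
    rw [e2, e3, e4, e5]
    rw [show -(lowSum j α + if i < j then (1:ℤ) else 0)
        = -lowSum j α + -(if i < j then (1:ℤ) else 0) by ring,
      zpow_add₀ hQ,
      show highSum i α - (if i < j then (1:ℤ) else 0)
        = highSum i α + -(if i < j then (1:ℤ) else 0) by ring,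
      zpow_add₀ hQ]
    ring

end QAux

namespace QAux

variable {n : ℕ} {q : ℝ}

/-- The "hamiltonian-like" operator `{q^e γ²}_q` in pointwise form. -/
def ham (q : ℝ) (e : ℤ) (f : QPoly n) : QPoly n :=
  fun α => ((q : ℂ) - (q : ℂ)⁻¹)⁻¹
    * ((q : ℂ) ^ (e + 2 * totSum α) - (q : ℂ) ^ (-(e + 2 * totSum α))) * f α

lemma ham_eq (hq : 0 < q) (e : ℤ) (f : QPoly n) :
    ((q : ℂ) - (q : ℂ)⁻¹)⁻¹ •
        ((q : ℂ) ^ e • gamAll q (gamAll q f) - (q : ℂ) ^ (-e) • gamAllInv q (gamAllInv q f))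
      = ham q e f := by
  have hQ := hQ0 hq
  funext α
  simp only [ham, gamAll, gamAllInv, Pi.smul_apply, Pi.sub_apply, smul_eq_mul]
  rw [show e + 2 * totSum α = e + totSum α + totSum α by ring, zpow_add₀ hQ, zpow_add₀ hQ,
    show -(e + totSum α + totSum α) = -e + -totSum α + -totSum α by ring,
    zpow_add₀ hQ, zpow_add₀ hQ]
  ring

lemma qhelper (hq : 0 < q) (hq1 : q ≠ 1) (m : ℤ) :
    qNum q (m + 1) * qNum q (m + 2) - qNum q (m - 1) * qNum q m
      = qNum q 2 * qNum q (2 * m + 1) := by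
  have hQ := hQ0 hq
  have hd := hden hq hq1
  have hX : (q : ℂ) ^ m ≠ 0 := zpow_ne_zero _ hQ
  unfold qNum
  rw [show (2 * m + 1 : ℤ) = m + m + 1 by ring, show (m + 2 : ℤ) = m + 1 + 1 by ring,
    show (-(m + m + 1) : ℤ) = -m + -m + -1 by ring,
    show (-(m + 1 + 1) : ℤ) = -m + -1 + -1 by ring,
    show (-(m + 1) : ℤ) = -m + -1 by ring,
    show (m - 1 : ℤ) = m + -1 by ring,
    show (-(m + -1) : ℤ) = -m + 1 by ring,
    show ((2 : ℤ)) = 1 + 1 by ring,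
    show (-(1 + 1) : ℤ) = -1 + -1 by ring]
  rw [div_mul_div_comm, div_mul_div_comm, div_mul_div_comm, div_sub_div_same]
  congr 1
  simp only [zpow_add₀ hQ, zpow_one, zpow_neg, zpow_neg_one]
  have huv : (q:ℂ) * (q:ℂ)⁻¹ = 1 := mul_inv_cancel₀ hQ
  linear_combination ((q:ℂ)⁻¹ * ((q:ℂ)^m)^2 + (q:ℂ) * (((q:ℂ)^m)⁻¹)^2
    - (q:ℂ)⁻¹ * (q:ℂ)^m * ((q:ℂ)^m)⁻¹ - (q:ℂ) * (q:ℂ)^m * ((q:ℂ)^m)⁻¹) * huv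

lemma wlemma (hq : 0 < q) (hq1 : q ≠ 1) (x m : ℤ) :
    qNum q m * ((q : ℂ) ^ x - (q : ℂ) ^ (-x))
        + qNum q 2 * ((q : ℂ) ^ (x + m + 2) - (q : ℂ) ^ (-(x + m + 2)))
      = qNum q (m + 2) * ((q : ℂ) ^ (x + 2) - (q : ℂ) ^ (-(x + 2))) := by
  have hQ := hQ0 hq
  have hd := hden hq hq1
  have hX : (q : ℂ) ^ x ≠ 0 := zpow_ne_zero _ hQ
  have hM : (q : ℂ) ^ m ≠ 0 := zpow_ne_zero _ hQ
  unfold qNum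
  rw [show (x + m + 2 : ℤ) = x + m + 1 + 1 by ring,
    show (-(x + m + 1 + 1) : ℤ) = -x + -m + -1 + -1 by ring,
    show (x + m + 1 + 1 : ℤ) = x + m + 1 + 1 by ring,
    show (m + 2 : ℤ) = m + 1 + 1 by ring,
    show (-(m + 1 + 1) : ℤ) = -m + -1 + -1 by ring,
    show (x + 2 : ℤ) = x + 1 + 1 by ring,
    show (-(x + 1 + 1) : ℤ) = -x + -1 + -1 by ring,
    show ((2 : ℤ)) = 1 + 1 by ring,
    show (-(1 + 1) : ℤ) = -1 + -1 by ring,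
    show (-m : ℤ) = -m by ring, show (-x : ℤ) = -x by ring]
  rw [div_mul_eq_mul_div, div_mul_eq_mul_div, div_mul_eq_mul_div, ← add_div]
  congr 1
  simp only [zpow_add₀ hQ, zpow_one, zpow_neg, zpow_neg_one]
  have huv : (q:ℂ) * (q:ℂ)⁻¹ = 1 := mul_inv_cancel₀ hQ
  linear_combination ((((q:ℂ)^x)⁻¹ * (q:ℂ)^m + (q:ℂ)^x * ((q:ℂ)^m)⁻¹
    - ((q:ℂ)^x)⁻¹ * ((q:ℂ)^m)⁻¹ - (q:ℂ)^x * (q:ℂ)^m) * (1 + (q:ℂ) * (q:ℂ)⁻¹)) * huv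

lemma ham_combine (hq : 0 < q) (hq1 : q ≠ 1) (m a : ℤ) (f : QPoly n) :
    qNum q m • ham q a f + qNum q 2 • ham q (a + m + 2) f
      = qNum q (m + 2) • ham q (a + 2) f := by
  funext α
  simp only [ham, Pi.add_apply, Pi.smul_apply, smul_eq_mul]
  have := wlemma hq hq1 (a + 2 * totSum α) m
  rw [show a + m + 2 + 2 * totSum α = a + 2 * totSum α + m + 2 by ring,
    show a + 2 + 2 * totSum α = a + 2 * totSum α + 2 by ring]
  set c := ((q : ℂ) - (q : ℂ)⁻¹)⁻¹
  set x := a + 2 * totSum α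
  calc qNum q m * (c * ((q:ℂ)^x - (q:ℂ)^(-x)) * f α)
        + qNum q 2 * (c * ((q:ℂ)^(x + m + 2) - (q:ℂ)^(-(x + m + 2))) * f α)
      = (qNum q m * ((q:ℂ)^x - (q:ℂ)^(-x))
          + qNum q 2 * ((q:ℂ)^(x + m + 2) - (q:ℂ)^(-(x + m + 2)))) * (c * f α) := by ring
    _ = qNum q (m + 2) * ((q:ℂ)^(x+2) - (q:ℂ)^(-(x+2))) * (c * f α) := by rw [this]
    _ = qNum q (m + 2) * (c * ((q:ℂ)^(x+2) - (q:ℂ)^(-(x+2))) * f α) := by ring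

lemma ham_step (hq : 0 < q) (e : ℤ) (f : QPoly n) :
    ham q e (QhatL q f) = QhatL q (ham q (e + 4) f) := by
  have hQ := hQ0 hq
  funext α
  simp only [ham, QhatL, Finset.sum_apply, Pi.smul_apply, smul_eq_mul, Finset.mul_sum]
  refine Finset.sum_congr rfl fun i _ => ?_
  rw [X2_apply, X2_apply]
  by_cases h : α i < 2
  · simp [h]
  · rw [if_neg h, if_neg h]
    have h2 : 2 ≤ α i := by omega
    simp only [ham]
    rw [totSum_sub_single h2]
    push_cast
    rw [show e + 4 + 2 * (totSum α - 2) = e + 2 * totSum α by ring]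
    ring

lemma ham_iter (hq : 0 < q) (e : ℤ) (m : ℕ) (f : QPoly n) :
    ham q e ((QhatL q)^[m] f) = (QhatL q)^[m] (ham q (e + 4 * m) f) := by
  induction m generalizing e f with
  | zero => simp
  | succ m ih =>
    rw [Function.iterate_succ_apply, ih, ham_step hq, Function.iterate_succ_apply]
    congr 2
    push_cast
    ring

end QAux

namespace QAux

variable {n : ℕ} {q : ℝ}

lemma diag (hq : 0 < q) (hq1 : q ≠ 1) (i : Fin n) (f : QPoly n) (α : QIdx n) :
    dR q i (dR q i (xL q i (xL q i f))) α - xL q i (xL q i (dR q i (dR q i f))) α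
      = qNum q 2 * qNum q (2 * (α i) + 1)
          * ((q:ℂ) ^ highSum i α * (q:ℂ) ^ highSum i α
            * (q:ℂ) ^ (-lowSum i α) * (q:ℂ) ^ (-lowSum i α)) * f α := by
  have h1 : dR q i (dR q i (xL q i (xL q i f))) α
      = qNum q (α i + 1) * (q:ℂ) ^ highSum i α
          * (qNum q (α i + 2) * (q:ℂ) ^ highSum i α
            * ((q:ℂ) ^ (-lowSum i α) * ((q:ℂ) ^ (-lowSum i α) * f α))) := by
    rw [D2_apply, X2_apply]
    have e0 : (α + Finsupp.single i 2 : QIdx n) i = α i + 2 := by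
      simp [Finsupp.add_apply]
    rw [e0, if_neg (by omega), lowSum_add_single, add_single_sub_cancel]
    simp [lt_irrefl]
  have h2 : xL q i (xL q i (dR q i (dR q i f))) α
      = qNum q ((α i : ℤ) - 1) * (q:ℂ) ^ highSum i α
          * (qNum q (α i) * (q:ℂ) ^ highSum i α
            * ((q:ℂ) ^ (-lowSum i α) * ((q:ℂ) ^ (-lowSum i α) * f α))) := by
    rw [X2_apply]
    by_cases hm : α i < 2
    · interval_cases h : (α i)
      · norm_num [qNum_zero]
      · norm_num [qNum_zero]
    · rw [if_neg hm]
      have hm2 : 2 ≤ α i := by omega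
      rw [D2_apply]
      have e0 : ((α - Finsupp.single i 2 : QIdx n) i : ℤ) = (α i : ℤ) - 2 := by
        simp [Finsupp.tsub_apply]
        omega
      have e1 : highSum i (α - Finsupp.single i 2) = highSum i α := by
        rw [highSum_sub_single i hm2]; simp [lt_irrefl]
      rw [e1, sub_add_single_cancel hm2, e0]
      rw [show (α i : ℤ) - 2 + 1 = (α i : ℤ) - 1 by ring,
        show (α i : ℤ) - 2 + 2 = (α i : ℤ) by ring]
      ring
  rw [h1, h2]
  have key := qhelper hq hq1 (α i : ℤ)
  linear_combination ((q:ℂ) ^ highSum i α * (q:ℂ) ^ highSum i α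
    * (q:ℂ) ^ (-lowSum i α) * (q:ℂ) ^ (-lowSum i α) * f α) * key

lemma telescope (hq : 0 < q) (α : QIdx n) :
    ∑ i : Fin n, (q:ℂ) ^ ((n:ℤ) - 1 - ((i:ℕ):ℤ)) * (q:ℂ) ^ (-((i:ℕ):ℤ))
        * qNum q (2 * (α i) + 1)
        * ((q:ℂ) ^ highSum i α * (q:ℂ) ^ highSum i α
          * (q:ℂ) ^ (-lowSum i α) * (q:ℂ) ^ (-lowSum i α))
      = ((q:ℂ) - (q:ℂ)⁻¹)⁻¹
          * ((q:ℂ) ^ ((n:ℤ) + 2 * totSum α) - (q:ℂ) ^ (-((n:ℤ) + 2 * totSum α))) := by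
  have hQ := hQ0 hq
  set P : ℕ → ℤ := fun t => ∑ j : Fin n, if (j:ℕ) < t then (α j : ℤ) else 0 with hP
  set E : ℕ → ℤ := fun t => (n:ℤ) - 2*t + 2*totSum α - 4 * P t with hE
  have hstep : ∀ i : Fin n,
      (q:ℂ) ^ ((n:ℤ) - 1 - ((i:ℕ):ℤ)) * (q:ℂ) ^ (-((i:ℕ):ℤ))
        * qNum q (2 * (α i) + 1)
        * ((q:ℂ) ^ highSum i α * (q:ℂ) ^ highSum i α
          * (q:ℂ) ^ (-lowSum i α) * (q:ℂ) ^ (-lowSum i α))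
      = ((q:ℂ) - (q:ℂ)⁻¹)⁻¹ * ((q:ℂ) ^ (E (i:ℕ)) - (q:ℂ) ^ (E ((i:ℕ)+1))) := by
    intro i
    have hPi : P (i:ℕ) = lowSum i α := by
      rw [hP]; dsimp only; unfold lowSum
      refine Finset.sum_congr rfl fun j _ => ?_
      by_cases h : j < i
      · rw [if_pos h, if_pos (show (j:ℕ) < (i:ℕ) from h)]
      · rw [if_neg h, if_neg (show ¬ (j:ℕ) < (i:ℕ) from fun hc => h hc)]
    have hPi1 : P ((i:ℕ)+1) = lowSum i α + (α i : ℤ) := by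
      rw [hP]; dsimp only; unfold lowSum
      have : ∀ j : Fin n, (if (j:ℕ) < (i:ℕ)+1 then (α j : ℤ) else 0)
          = (if j < i then (α j : ℤ) else 0) + (if j = i then (α j : ℤ) else 0) := by
        intro j
        by_cases h2 : j = i
        · subst h2; simp [lt_irrefl, Nat.lt_succ_iff]
        · have h3 : (j:ℕ) ≠ (i:ℕ) := fun hc => h2 (Fin.ext hc)
          by_cases h1 : j < i
          · have : (j:ℕ) < (i:ℕ) := h1
            simp [h1, h2, Nat.lt_succ_of_lt this]
          · have h4 : ¬ (j:ℕ) < (i:ℕ) := fun hc => h1 hc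
            simp [h1, h2, show ¬ (j:ℕ) < (i:ℕ)+1 by omega]
      rw [Finset.sum_congr rfl fun j _ => this j, Finset.sum_add_distrib,
        Finset.sum_ite_eq' Finset.univ i (fun j => (α j : ℤ))]
      simp
    have hhl := hs_ls_tot i α
    have e1 : (q:ℂ) ^ ((n:ℤ) - 1 - ((i:ℕ):ℤ)) * (q:ℂ) ^ (-((i:ℕ):ℤ))
        * (q:ℂ) ^ highSum i α * (q:ℂ) ^ highSum i α
        * (q:ℂ) ^ (-lowSum i α) * (q:ℂ) ^ (-lowSum i α)
        * (q:ℂ) ^ (2 * (α i : ℤ) + 1)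
        = (q:ℂ) ^ (E (i:ℕ)) := by
      rw [← zpow_add₀ hQ, ← zpow_add₀ hQ, ← zpow_add₀ hQ, ← zpow_add₀ hQ,
        ← zpow_add₀ hQ, ← zpow_add₀ hQ]
      congr 1
      simp only [hE]
      rw [hPi]
      omega
    have e2 : (q:ℂ) ^ ((n:ℤ) - 1 - ((i:ℕ):ℤ)) * (q:ℂ) ^ (-((i:ℕ):ℤ))
        * (q:ℂ) ^ highSum i α * (q:ℂ) ^ highSum i α
        * (q:ℂ) ^ (-lowSum i α) * (q:ℂ) ^ (-lowSum i α)
        * (q:ℂ) ^ (-(2 * (α i : ℤ) + 1))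
        = (q:ℂ) ^ (E ((i:ℕ)+1)) := by
      rw [← zpow_add₀ hQ, ← zpow_add₀ hQ, ← zpow_add₀ hQ, ← zpow_add₀ hQ,
        ← zpow_add₀ hQ, ← zpow_add₀ hQ]
      congr 1
      simp only [hE]
      rw [hPi1]
      push_cast
      omega
    unfold qNum
    rw [eq_comm]
    calc ((q:ℂ) - (q:ℂ)⁻¹)⁻¹ * ((q:ℂ) ^ (E (i:ℕ)) - (q:ℂ) ^ (E ((i:ℕ)+1)))
        = ((q:ℂ) - (q:ℂ)⁻¹)⁻¹ * ((q:ℂ) ^ (E (i:ℕ))) - ((q:ℂ) - (q:ℂ)⁻¹)⁻¹ * ((q:ℂ) ^ (E ((i:ℕ)+1))) := by ring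
      _ = _ := by
          rw [← e1, ← e2]
          ring
  calc (∑ i : Fin n, (q:ℂ) ^ ((n:ℤ) - 1 - ((i:ℕ):ℤ)) * (q:ℂ) ^ (-((i:ℕ):ℤ))
        * qNum q (2 * (α i) + 1)
        * ((q:ℂ) ^ highSum i α * (q:ℂ) ^ highSum i α
          * (q:ℂ) ^ (-lowSum i α) * (q:ℂ) ^ (-lowSum i α)))
      = ∑ i : Fin n, ((q:ℂ) - (q:ℂ)⁻¹)⁻¹ * ((q:ℂ) ^ (E (i:ℕ)) - (q:ℂ) ^ (E ((i:ℕ)+1))) :=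
        Finset.sum_congr rfl fun i _ => hstep i
    _ = ∑ t ∈ Finset.range n, ((q:ℂ) - (q:ℂ)⁻¹)⁻¹ * ((q:ℂ) ^ (E t) - (q:ℂ) ^ (E (t+1))) :=
        Fin.sum_univ_eq_sum_range (fun t => ((q:ℂ) - (q:ℂ)⁻¹)⁻¹ * ((q:ℂ) ^ (E t) - (q:ℂ) ^ (E (t+1)))) n
    _ = ((q:ℂ) - (q:ℂ)⁻¹)⁻¹ * ∑ t ∈ Finset.range n, ((q:ℂ) ^ (E t) - (q:ℂ) ^ (E (t+1))) := by
        rw [Finset.mul_sum]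
    _ = ((q:ℂ) - (q:ℂ)⁻¹)⁻¹ * ((q:ℂ) ^ (E 0) - (q:ℂ) ^ (E n)) := by
        rw [Finset.sum_range_sub' (fun t => (q:ℂ) ^ (E t)) n]
    _ = _ := by
        have hE0 : E 0 = (n:ℤ) + 2 * totSum α := by
          simp only [hE, hP]
          simp
        have hEn : E n = -((n:ℤ) + 2 * totSum α) := by
          have hPn : P n = totSum α := by
            rw [hP]; unfold totSum
            refine Finset.sum_congr rfl fun j _ => ?_
            simp [j.isLt]
          simp only [hE]
          rw [hPn]
          ring
        rw [hE0, hEn]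

lemma base (hq : 0 < q) (hq1 : q ≠ 1) (f : QPoly n) :
    qLap q (QhatL q f) - QhatL q (qLap q f) = qNum q 2 • ham q (n : ℤ) f := by
  have hL : qLap q (QhatL q f) = ∑ i : Fin n, ∑ j : Fin n,
      ((q:ℂ) ^ ((n:ℤ) - 1 - ((i:ℕ):ℤ)) * (q:ℂ) ^ (-((j:ℕ):ℤ)))
        • dR q i (dR q i (xL q j (xL q j f))) := by
    unfold qLap QhatL
    simp only [dR_sum, dR_smul, Finset.smul_sum, smul_smul]
  have hR : QhatL q (qLap q f) = ∑ i : Fin n, ∑ j : Fin n,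
      ((q:ℂ) ^ ((n:ℤ) - 1 - ((i:ℕ):ℤ)) * (q:ℂ) ^ (-((j:ℕ):ℤ)))
        • xL q j (xL q j (dR q i (dR q i f))) := by
    unfold QhatL qLap
    simp only [xL_sum, xL_smul, Finset.smul_sum, smul_smul]
    rw [Finset.sum_comm]
    exact Finset.sum_congr rfl fun i _ => Finset.sum_congr rfl fun j _ => by rw [mul_comm]
  rw [hL, hR, ← Finset.sum_sub_distrib]
  have hcol : ∀ i : Fin n,
      ((∑ j : Fin n, ((q:ℂ) ^ ((n:ℤ) - 1 - ((i:ℕ):ℤ)) * (q:ℂ) ^ (-((j:ℕ):ℤ)))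
          • dR q i (dR q i (xL q j (xL q j f))))
        - ∑ j : Fin n, ((q:ℂ) ^ ((n:ℤ) - 1 - ((i:ℕ):ℤ)) * (q:ℂ) ^ (-((j:ℕ):ℤ)))
          • xL q j (xL q j (dR q i (dR q i f))))
      = ((q:ℂ) ^ ((n:ℤ) - 1 - ((i:ℕ):ℤ)) * (q:ℂ) ^ (-((i:ℕ):ℤ)))
          • (dR q i (dR q i (xL q i (xL q i f))) - xL q i (xL q i (dR q i (dR q i f)))) := by
    intro i
    rw [← Finset.sum_sub_distrib]
    simp only [← smul_sub]
    refine Finset.sum_eq_single i (fun j _ hji => ?_) (fun h => absurd (Finset.mem_univ i) h)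
    have hij : i ≠ j := Ne.symm hji
    simp only [dR_xL_comm hq hij]
    simp
  rw [Finset.sum_congr rfl fun i _ => hcol i]
  funext α
  simp only [Finset.sum_apply, Pi.smul_apply, Pi.sub_apply, smul_eq_mul]
  calc (∑ i : Fin n, (q:ℂ) ^ ((n:ℤ) - 1 - ((i:ℕ):ℤ)) * (q:ℂ) ^ (-((i:ℕ):ℤ))
        * (dR q i (dR q i (xL q i (xL q i f))) α - xL q i (xL q i (dR q i (dR q i f))) α))
      = ∑ i : Fin n, (qNum q 2 * f α)
          * ((q:ℂ) ^ ((n:ℤ) - 1 - ((i:ℕ):ℤ)) * (q:ℂ) ^ (-((i:ℕ):ℤ))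
            * qNum q (2 * (α i) + 1)
            * ((q:ℂ) ^ highSum i α * (q:ℂ) ^ highSum i α
              * (q:ℂ) ^ (-lowSum i α) * (q:ℂ) ^ (-lowSum i α))) := by
        refine Finset.sum_congr rfl fun i _ => ?_
        rw [diag hq hq1 i f α]
        ring
    _ = (qNum q 2 * f α)
          * ∑ i : Fin n, ((q:ℂ) ^ ((n:ℤ) - 1 - ((i:ℕ):ℤ)) * (q:ℂ) ^ (-((i:ℕ):ℤ))
            * qNum q (2 * (α i) + 1)
            * ((q:ℂ) ^ highSum i α * (q:ℂ) ^ highSum i α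
              * (q:ℂ) ^ (-lowSum i α) * (q:ℂ) ^ (-lowSum i α))) := by
        rw [Finset.mul_sum]
    _ = _ := by
        rw [telescope hq α]
        simp only [ham]
        ring

lemma main (hq : 0 < q) (hq1 : q ≠ 1) (k : ℕ) (hk : 1 ≤ k) (f : QPoly n) :
    qLap q ((QhatL q)^[k] f) - (QhatL q)^[k] (qLap q f)
      = qNum q (2 * (k:ℤ)) • (QhatL q)^[k - 1] (ham q (2 * (k:ℤ) + (n:ℤ) - 2) f) := by
  induction k, hk using Nat.le_induction generalizing f with
  | base =>
    rw [show (1:ℕ) - 1 = 0 from rfl]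
    simp only [Function.iterate_one, Function.iterate_zero, id_eq]
    rw [show (2 * ((1:ℕ):ℤ) + (n:ℤ) - 2) = (n:ℤ) by norm_num,
      show (2 * ((1:ℕ):ℤ)) = (2:ℤ) by norm_num]
    exact base hq hq1 f
  | succ k hk ih =>
    have hiter : ∀ g : QPoly n, (QhatL q)^[k+1] g = QhatL q ((QhatL q)^[k] g) :=
      fun g => Function.iterate_succ_apply' (QhatL q) k g
    have e1 : qLap q ((QhatL q)^[k+1] f) - (QhatL q)^[k+1] (qLap q f)
        = (qLap q (QhatL q ((QhatL q)^[k] f)) - QhatL q (qLap q ((QhatL q)^[k] f)))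
          + QhatL q (qLap q ((QhatL q)^[k] f) - (QhatL q)^[k] (qLap q f)) := by
      rw [hiter f, hiter (qLap q f), QhatL_sub]
      abel
    rw [e1, base hq hq1, ih f, ham_iter hq ((n:ℕ):ℤ) k, QhatL_smul]
    have hk1 : k - 1 + 1 = k := by omega
    have hQk : ∀ x : QPoly n, QhatL q ((QhatL q)^[k-1] x) = (QhatL q)^[k] x := by
      intro x
      have h := Function.iterate_succ_apply' (QhatL q) (k-1) x
      rw [show (k-1).succ = k by omega] at h
      exact h.symm
    rw [hQk]
    rw [← iter_smul, ← iter_smul, ← iter_add]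
    rw [add_comm (qNum q 2 • ham q ((n:ℤ) + 4*(k:ℕ)) f)
      (qNum q (2*(k:ℤ)) • ham q (2*(k:ℤ)+(n:ℤ)-2) f)]
    rw [show ((n:ℤ) + 4*(k:ℕ) : ℤ) = (2*(k:ℤ)+(n:ℤ)-2) + 2*(k:ℤ) + 2 by push_cast; ring]
    rw [ham_combine hq hq1 (2*(k:ℤ)) (2*(k:ℤ)+(n:ℤ)-2) f]
    rw [show (2*(k:ℤ) + 2 : ℤ) = 2*(((k+1:ℕ)):ℤ) by push_cast; ring,
      show ((2*(k:ℤ)+(n:ℤ)-2) + 2 : ℤ) = 2*(((k+1:ℕ)):ℤ) + (n:ℤ) - 2 by push_cast; ring]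
    rw [iter_smul, show (k+1) - 1 = k from rfl]

end QAux
/-- `Δ_qᴿ (Q̂ᴸ)^k − (Q̂ᴸ)^k Δ_qᴿ = (Q̂ᴸ)^{k−1} [2k]_q {q^{2k+n−2} γ²}_q`,
where `{a}_q = (a − a⁻¹)/(q − q⁻¹)`. -/
theorem qLaplacian_Qhat_commutator (n : ℕ) (q : ℝ) (hq : 0 < q) (hq1 : q ≠ 1)
    (k : ℕ) (hk : 1 ≤ k) :
    ∀ f : QPoly n,
      qLap q ((QhatL q)^[k] f) - (QhatL q)^[k] (qLap q f)
        = qNum q (2 * (k : ℤ)) •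
            (QhatL q)^[k - 1]
              (((q : ℂ) - (q : ℂ)⁻¹)⁻¹ •
                ((q : ℂ) ^ (2 * (k : ℤ) + (n : ℤ) - 2) • gamAll q (gamAll q f)
                  - (q : ℂ) ^ (-(2 * (k : ℤ) + (n : ℤ) - 2)) • gamAllInv q (gamAllInv q f))) := by
  intro f
  rw [QAux.ham_eq hq (2 * (k : ℤ) + (n : ℤ) - 2) f]
  exact QAux.main hq hq1 k hk f
end
end

section
/- In the case n = 2, with z_r = x₁ + i q^r x₂ and z_q^m = z₀z₁⋯z_{m−1} in the q-commutative algebra ℂ⟨x₁,x₂⟩/(x₁x₂ − q x₂x₁), one has ∂₁ᴿ z_q^m = [m]_q z₁z₂⋯z_{m−1} and ∂₂ᴿ z_q^m = i [m]_q z₁z₂⋯z_{m−1}. -/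
noncomputable section

/-- `z_r = x₁ + i q^r x₂` in the q-plane (`n = 2`). -/
def zvar (q : ℝ) (r : ℕ) : QPoly 2 :=
  Xvar 0 + (Complex.I * (q : ℂ) ^ (r : ℤ)) • Xvar 1

/-- `z̄_r = x₁ − i q^r x₂`. -/
def zbar (q : ℝ) (r : ℕ) : QPoly 2 :=
  Xvar 0 - (Complex.I * (q : ℂ) ^ (r : ℤ)) • Xvar 1

/-- `z_s z_{s+1} ⋯ z_{s+m-1}`. -/
def zProd (q : ℝ) : ℕ → ℕ → QPoly 2
  | _, 0 => qOne
  | s, m + 1 => qMul q (zvar q s) (zProd q (s + 1) m)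

/-- `z̄_s z̄_{s+1} ⋯ z̄_{s+m-1}`. -/
def zbProd (q : ℝ) : ℕ → ℕ → QPoly 2
  | _, 0 => qOne
  | s, m + 1 => qMul q (zbar q s) (zbProd q (s + 1) m)


/-! ### Auxiliary development for STATEMENT 12 -/

namespace ZqAux

lemma qchoose_succ (b : ℕ) : (b+1).choose 2 = b.choose 2 + b := by
  have h := Nat.choose_succ_succ b 1
  simp only [Nat.choose_one_right, Nat.succ_eq_add_one, Nat.reduceAdd] at h
  omega

lemma qNum_ne_zero (q : ℝ) (hq : 0 < q) (hq1 : q ≠ 1) (k : ℤ) (hk : 0 < k) :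
    qNum q k ≠ 0 := by
  have hq0 : q ≠ 0 := ne_of_gt hq
  have h1 : (q : ℂ) ^ k = ((q ^ k : ℝ) : ℂ) := by
    rw [Complex.ofReal_zpow]
  have h2 : (q : ℂ) ^ (-k) = ((q ^ (-k) : ℝ) : ℂ) := by
    rw [Complex.ofReal_zpow]
  have h3 : ((q : ℂ))⁻¹ = ((q⁻¹ : ℝ) : ℂ) := by push_cast; ring
  rw [qNum, h1, h2, h3]
  rw [div_ne_zero_iff]
  constructor
  · rw [← Complex.ofReal_sub, Complex.ofReal_ne_zero, sub_ne_zero]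
    intro h
    have := zpow_right_injective₀ hq hq1 h
    omega
  · rw [← Complex.ofReal_sub, Complex.ofReal_ne_zero, sub_ne_zero]
    intro h
    have h6 : q ^ (1:ℤ) = q ^ (-1:ℤ) := by
      rw [zpow_one, zpow_neg_one]; exact h
    have := zpow_right_injective₀ hq hq1 h6
    omega

lemma qNum_zero (q : ℝ) : qNum q 0 = 0 := by simp [qNum]

/-- Numerator product `∏_{j<b} [m-j]`. -/
def Nprod (q : ℝ) (m : ℤ) (b : ℕ) : ℂ := ∏ j ∈ Finset.range b, qNum q (m - j)

/-- Denominator product `∏_{j<b} [j+1]`. -/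
def Dprod (q : ℝ) (b : ℕ) : ℂ := ∏ j ∈ Finset.range b, qNum q (j + 1)

/-- The symmetric Gaussian binomial `[m choose b]`. -/
def Gb (q : ℝ) (m b : ℕ) : ℂ := Nprod q m b / Dprod q b

lemma Dprod_ne_zero (q : ℝ) (hq : 0 < q) (hq1 : q ≠ 1) (b : ℕ) : Dprod q b ≠ 0 := by
  rw [Dprod, Finset.prod_ne_zero_iff]
  intro j _
  exact qNum_ne_zero q hq hq1 _ (by omega)

lemma Dprod_succ (q : ℝ) (b : ℕ) : Dprod q (b+1) = Dprod q b * qNum q ((b:ℤ)+1) := by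
  rw [Dprod, Finset.prod_range_succ]; rfl

lemma Nprod_succ (q : ℝ) (m : ℤ) (b : ℕ) :
    Nprod q m (b+1) = Nprod q m b * qNum q (m - b) := by
  rw [Nprod, Finset.prod_range_succ]; rfl

lemma Nprod_succ_top (q : ℝ) (m : ℤ) (b : ℕ) :
    Nprod q (m+1) (b+1) = qNum q (m+1) * Nprod q m b := by
  rw [Nprod, Finset.prod_range_succ', mul_comm]
  congr 1
  · norm_num
  · apply Finset.prod_congr rfl
    intro j _
    congr 1
    push_cast; ring

lemma Gb_zero (q : ℝ) (m : ℕ) : Gb q m 0 = 1 := by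
  simp [Gb, Nprod, Dprod]

lemma Gb_eq_zero (q : ℝ) {m b : ℕ} (h : m < b) : Gb q m b = 0 := by
  rw [Gb, Nprod, Finset.prod_eq_zero (Finset.mem_range.mpr h), zero_div]
  rw [show (m : ℤ) - (m : ℕ) = 0 by omega]
  exact qNum_zero q

lemma qNum_pascal (q : ℝ) (hq : 0 < q) (b m : ℕ) :
    qNum q ((m:ℤ)+1) =
      (q:ℂ) ^ ((b:ℤ)+1) * qNum q ((m:ℤ)-b) + (q:ℂ) ^ ((b:ℤ)-m) * qNum q ((b:ℤ)+1) := by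
  have hX : (q : ℂ) ≠ 0 := by
    simp only [ne_eq, Complex.ofReal_eq_zero]; exact ne_of_gt hq
  rw [qNum, qNum, qNum, ← mul_div_assoc, ← mul_div_assoc, ← add_div]
  congr 1
  rw [mul_sub, mul_sub, ← zpow_add₀ hX, ← zpow_add₀ hX, ← zpow_add₀ hX, ← zpow_add₀ hX]
  rw [show (b:ℤ)+1+((m:ℤ)-b) = (m:ℤ)+1 by ring,
      show (b:ℤ)+1+(-((m:ℤ)-(b:ℤ))) = 2*b+1-m by ring,
      show (b:ℤ)-(m:ℤ)+((b:ℤ)+1) = 2*b+1-m by ring,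
      show (b:ℤ)-(m:ℤ)+(-((b:ℤ)+1)) = -((m:ℤ)+1) by ring]
  ring

lemma Gb_pascal (q : ℝ) (hq : 0 < q) (hq1 : q ≠ 1) (m b : ℕ) :
    Gb q (m+1) (b+1) =
      (q:ℂ) ^ ((b:ℤ)+1) * Gb q m (b+1) + (q:ℂ) ^ ((b:ℤ)-m) * Gb q m b := by
  have hD := Dprod_ne_zero q hq hq1 b
  have hc : qNum q ((b:ℤ)+1) ≠ 0 := qNum_ne_zero q hq hq1 _ (by omega)
  rw [Gb, Gb, Gb]
  rw [show ((m:ℕ)+1 : ℕ) = (m+1 : ℕ) from rfl]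
  rw [show (((m+1:ℕ)) : ℤ) = (m:ℤ)+1 by push_cast; ring] -- fix cast inside Nprod
  rw [Nprod_succ_top, Nprod_succ, Dprod_succ]
  field_simp
  linear_combination (Nprod q m b) *
    qNum_pascal q hq b m

lemma GA (q : ℝ) (m b : ℕ) :
    qNum q ((m:ℤ)+1-b) * Gb q (m+1) b = qNum q ((m:ℤ)+1) * Gb q m b := by
  rw [Gb, Gb, ← mul_div_assoc, ← mul_div_assoc]
  congr 1
  rw [show (((m+1:ℕ)) : ℤ) = (m:ℤ)+1 by push_cast; ring]
  rw [← Nprod_succ_top, Nprod_succ]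
  ring

lemma GB (q : ℝ) (hq : 0 < q) (hq1 : q ≠ 1) (m b : ℕ) :
    qNum q ((b:ℤ)+1) * Gb q (m+1) (b+1) = qNum q ((m:ℤ)+1) * Gb q m b := by
  have hD := Dprod_ne_zero q hq hq1 b
  have hc : qNum q ((b:ℤ)+1) ≠ 0 := qNum_ne_zero q hq hq1 _ (by omega)
  rw [Gb, Gb]
  rw [show (((m+1:ℕ)) : ℤ) = (m:ℤ)+1 by push_cast; ring]
  rw [Nprod_succ_top, Dprod_succ]
  field_simp

end ZqAux

namespace ZqAux2
open ZqAux

lemma qExp_two (α β : QIdx 2) : qExp α β = -((α 1 : ℤ) * (β 0 : ℤ)) := by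
  rw [qExp, Fin.sum_univ_two, Fin.sum_univ_two, Fin.sum_univ_two]
  rw [if_neg (by decide : ¬ ((0:Fin 2) < 0)), if_neg (by decide : ¬ ((1:Fin 2) < 0)),
    if_pos (by decide : (0:Fin 2) < 1), if_neg (by decide : ¬ ((1:Fin 2) < 1))]
  ring

lemma highSum_zero (α : QIdx 2) : highSum 0 α = (α 1 : ℤ) := by
  rw [highSum, Fin.sum_univ_two]
  rw [if_neg (by decide : ¬ ((0:Fin 2) < 0)), if_pos (by decide : (0:Fin 2) < 1)]
  ring

lemma highSum_one (α : QIdx 2) : highSum 1 α = 0 := by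
  rw [highSum, Fin.sum_univ_two]
  rw [if_neg (by decide : ¬ ((1:Fin 2) < 0)), if_neg (by decide : ¬ ((1:Fin 2) < 1))]
  ring

lemma single_ne : (Finsupp.single (0:Fin 2) 1 : QIdx 2) ≠ Finsupp.single 1 1 := by
  intro h
  have := DFunLike.congr_fun h 0
  simp [Finsupp.single_apply] at this

lemma sum_anti (α δ : QIdx 2) (h : QIdx 2 → ℂ) :
    (∑ p ∈ Finset.HasAntidiagonal.antidiagonal α, if p.1 = δ then h p.2 else 0)
      = if δ ≤ α then h (α - δ) else 0 := by
  by_cases hle : δ ≤ α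
  · rw [if_pos hle]
    rw [Finset.sum_eq_single (δ, α - δ)]
    · simp
    · rintro ⟨p1, p2⟩ hp hne
      rw [Finset.HasAntidiagonal.mem_antidiagonal] at hp
      by_cases h1 : p1 = δ
      · exfalso; apply hne
        subst h1
        have : p2 = α - p1 := eq_tsub_of_add_eq (by rw [add_comm]; exact hp)
        rw [this]
      · rw [if_neg h1]
    · intro hmem
      exfalso; apply hmem
      rw [Finset.HasAntidiagonal.mem_antidiagonal]
      exact add_tsub_cancel_of_le hle
  · rw [if_neg hle]
    apply Finset.sum_eq_zero
    rintro ⟨p1, p2⟩ hp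
    rw [Finset.HasAntidiagonal.mem_antidiagonal] at hp
    rw [if_neg]
    intro h1
    apply hle
    subst h1
    calc p1 ≤ p1 + p2 := self_le_add_right p1 p2
    _ = α := hp

lemma qMul_zvar (q : ℝ) (s : ℕ) (g : QPoly 2) (α : QIdx 2) :
    qMul q (zvar q s) g α =
      (if 1 ≤ α 0 then g (α - Finsupp.single 0 1) else 0)
      + Complex.I * (q:ℂ)^(s:ℤ) * (q:ℂ)^(-(α 0 : ℤ)) *
          (if 1 ≤ α 1 then g (α - Finsupp.single 1 1) else 0) := by
  have step : ∀ p ∈ Finset.HasAntidiagonal.antidiagonal α,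
      (q:ℂ) ^ qExp p.1 p.2 * zvar q s p.1 * g p.2
      = (if p.1 = Finsupp.single 0 1 then (q:ℂ) ^ qExp p.1 p.2 * g p.2 else 0)
        + (if p.1 = Finsupp.single 1 1 then
            Complex.I * (q:ℂ)^(s:ℤ) * (q:ℂ) ^ qExp p.1 p.2 * g p.2 else 0) := by
    rintro ⟨p1, p2⟩ _
    simp only [zvar, Xvar, mono, Pi.add_apply, Pi.smul_apply, smul_eq_mul]
    split_ifs with h0 h1 h1
    · exact absurd (h0 ▸ h1) single_ne
    · ring
    · ring
    · ring
  rw [qMul, Finset.sum_congr rfl step, Finset.sum_add_distrib]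
  have e0 : (∑ p ∈ Finset.HasAntidiagonal.antidiagonal α,
      if p.1 = Finsupp.single 0 1 then (q:ℂ) ^ qExp p.1 p.2 * g p.2 else 0)
      = if Finsupp.single (0:Fin 2) 1 ≤ α then
          (q:ℂ) ^ qExp (Finsupp.single (0:Fin 2) 1) (α - Finsupp.single 0 1) *
            g (α - Finsupp.single 0 1) else 0 := by
    have := sum_anti α (Finsupp.single 0 1)
      (fun β => (q:ℂ) ^ qExp (Finsupp.single (0:Fin 2) 1) β * g β)
    rw [← this]
    apply Finset.sum_congr rfl
    rintro ⟨p1, p2⟩ _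
    by_cases h : p1 = Finsupp.single 0 1
    · rw [if_pos h, if_pos h, h]
    · rw [if_neg h, if_neg h]
  have e1 : (∑ p ∈ Finset.HasAntidiagonal.antidiagonal α,
      if p.1 = Finsupp.single 1 1 then
        Complex.I * (q:ℂ)^(s:ℤ) * (q:ℂ) ^ qExp p.1 p.2 * g p.2 else 0)
      = if Finsupp.single (1:Fin 2) 1 ≤ α then
          Complex.I * (q:ℂ)^(s:ℤ) *
            (q:ℂ) ^ qExp (Finsupp.single (1:Fin 2) 1) (α - Finsupp.single 1 1) *
            g (α - Finsupp.single 1 1) else 0 := by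
    have := sum_anti α (Finsupp.single 1 1)
      (fun β => Complex.I * (q:ℂ)^(s:ℤ) *
        (q:ℂ) ^ qExp (Finsupp.single (1:Fin 2) 1) β * g β)
    rw [← this]
    apply Finset.sum_congr rfl
    rintro ⟨p1, p2⟩ _
    by_cases h : p1 = Finsupp.single 1 1
    · rw [if_pos h, if_pos h, h]
    · rw [if_neg h, if_neg h]
  rw [e0, e1]
  have hq0 : qExp (Finsupp.single (0:Fin 2) 1) (α - Finsupp.single 0 1) = 0 := by
    rw [qExp_two]
    simp [Finsupp.single_apply]
  have hq1 : qExp (Finsupp.single (1:Fin 2) 1) (α - Finsupp.single 1 1) = -(α 0 : ℤ) := by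
    rw [qExp_two]
    simp [Finsupp.single_apply, Finsupp.tsub_apply]
  rw [hq0, hq1]
  simp only [Finsupp.single_le_iff, zpow_zero, one_mul, mul_ite, mul_zero]

end ZqAux2

namespace ZqAux3
open ZqAux ZqAux2

lemma sub0_apply0 (α : QIdx 2) : (α - Finsupp.single 0 1 : QIdx 2) 0 = α 0 - 1 := by
  rw [Finsupp.tsub_apply, Finsupp.single_eq_same]

lemma sub0_apply1 (α : QIdx 2) : (α - Finsupp.single 0 1 : QIdx 2) 1 = α 1 := by
  rw [Finsupp.tsub_apply, Finsupp.single_eq_of_ne (by decide), Nat.sub_zero]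

lemma sub1_apply0 (α : QIdx 2) : (α - Finsupp.single 1 1 : QIdx 2) 0 = α 0 := by
  rw [Finsupp.tsub_apply, Finsupp.single_eq_of_ne (by decide), Nat.sub_zero]

lemma sub1_apply1 (α : QIdx 2) : (α - Finsupp.single 1 1 : QIdx 2) 1 = α 1 - 1 := by
  rw [Finsupp.tsub_apply, Finsupp.single_eq_same]

lemma zProd_coeff (q : ℝ) (hq : 0 < q) (hq1 : q ≠ 1) (m : ℕ) :
    ∀ (s : ℕ) (α : QIdx 2),
    zProd q s m α = if α 0 + α 1 = m then
      Complex.I ^ (α 1) * (q:ℂ) ^ ((s:ℤ) * (α 1) + ((α 1).choose 2 : ℤ)) * Gb q m (α 1)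
    else 0 := by
  have hX : (q : ℂ) ≠ 0 := by
    simp only [ne_eq, Complex.ofReal_eq_zero]; exact ne_of_gt hq
  induction m with
  | zero =>
    intro s α
    show qOne α = _
    rw [qOne]
    by_cases h : α 0 + α 1 = 0
    · have h0 : α 0 = 0 := by omega
      have h1 : α 1 = 0 := by omega
      have hα : α = 0 := by
        ext i
        fin_cases i
        · exact h0
        · exact h1
      rw [if_pos hα, if_pos h, h1]
      simp [Gb_zero]
    · have hα : ¬ (α = 0) := by
        intro h'
        apply h
        rw [h']
        simp
      rw [if_neg hα, if_neg h]
  | succ m ih =>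
    intro s α
    show qMul q (zvar q s) (zProd q (s+1) m) α = _
    rw [qMul_zvar, ih (s+1) (α - Finsupp.single 0 1), ih (s+1) (α - Finsupp.single 1 1)]
    rw [sub0_apply0, sub0_apply1, sub1_apply0, sub1_apply1]
    by_cases hP : α 0 + α 1 = m + 1
    · rw [if_pos hP]
      rcases Nat.eq_zero_or_pos (α 1) with hb | hb
      · -- α 1 = 0, so α 0 = m+1 ≥ 1
        rw [if_pos (show 1 ≤ α 0 by omega), if_pos (show α 0 - 1 + α 1 = m by omega),
          if_neg (show ¬ (1 ≤ α 1) by omega)]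
        rw [hb]
        simp [Gb_zero]
      · -- α 1 = b'+1
        obtain ⟨b', hb'⟩ : ∃ b', α 1 = b' + 1 := ⟨α 1 - 1, by omega⟩
        have hfirst : (if 1 ≤ α 0 then
            (if α 0 - 1 + α 1 = m then
              Complex.I ^ (α 1) * (q:ℂ) ^ (((s+1:ℕ):ℤ) * (α 1) + ((α 1).choose 2 : ℤ)) *
                Gb q m (α 1) else 0) else 0)
            = Complex.I ^ (α 1) * (q:ℂ) ^ (((s+1:ℕ):ℤ) * (α 1) + ((α 1).choose 2 : ℤ)) *
                Gb q m (α 1) := by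
          by_cases ha : 1 ≤ α 0
          · rw [if_pos ha, if_pos (by omega)]
          · rw [if_neg ha, Gb_eq_zero q (show m < α 1 by omega), mul_zero]
        rw [hfirst, if_pos (show 1 ≤ α 1 by omega), if_pos (show α 0 + (α 1 - 1) = m by omega)]
        rw [hb']
        rw [show (b' + 1) - 1 = b' from rfl]
        rw [Gb_pascal q hq hq1 m b']
        have hC : ((b'+1).choose 2 : ℤ) = (b'.choose 2 : ℤ) + b' := by
          have := qchoose_succ b'
          push_cast [this]
          ring
        have h1 : (q:ℂ) ^ ((s:ℤ) * ((b':ℤ)+1) + ((b'+1).choose 2 : ℤ)) * (q:ℂ) ^ ((b':ℤ)+1)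
            = (q:ℂ) ^ (((s+1:ℕ):ℤ) * ((b'+1:ℕ):ℤ) + ((b'+1).choose 2 : ℤ)) := by
          rw [← zpow_add₀ hX]
          congr 1
          push_cast
          ring
        have h2 : (q:ℂ) ^ ((s:ℤ) * ((b':ℤ)+1) + ((b'+1).choose 2 : ℤ)) * (q:ℂ) ^ ((b':ℤ)-m)
            = (q:ℂ) ^ ((s:ℤ)) * (q:ℂ) ^ (-(α 0 : ℤ)) *
              (q:ℂ) ^ (((s+1:ℕ):ℤ) * (b':ℤ) + (b'.choose 2 : ℤ)) := by
          rw [← zpow_add₀ hX, ← zpow_add₀ hX, ← zpow_add₀ hX]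
          congr 1
          have haz : (α 0 : ℤ) = (m:ℤ) - b' := by omega
          rw [hC, haz]
          push_cast
          ring
        have hcast1 : ((b'+1:ℕ):ℤ) = (b':ℤ) + 1 := by push_cast; ring
        rw [hcast1] at h1 ⊢
        linear_combination (-(Complex.I ^ (b'+1) * Gb q m (b'+1))) * h1 -
          (Complex.I ^ (b'+1) * Gb q m b') * h2
    · rw [if_neg hP]
      split_ifs <;> first | omega | ring

end ZqAux3

namespace ZqAux4
open ZqAux ZqAux2 ZqAux3

lemma add0_apply0 (α : QIdx 2) : (α + Finsupp.single 0 1 : QIdx 2) 0 = α 0 + 1 := by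
  rw [Finsupp.add_apply, Finsupp.single_eq_same]

lemma add0_apply1 (α : QIdx 2) : (α + Finsupp.single 0 1 : QIdx 2) 1 = α 1 := by
  rw [Finsupp.add_apply, Finsupp.single_eq_of_ne (by decide), Nat.add_zero]

lemma add1_apply0 (α : QIdx 2) : (α + Finsupp.single 1 1 : QIdx 2) 0 = α 0 := by
  rw [Finsupp.add_apply, Finsupp.single_eq_of_ne (by decide), Nat.add_zero]

lemma add1_apply1 (α : QIdx 2) : (α + Finsupp.single 1 1 : QIdx 2) 1 = α 1 + 1 := by
  rw [Finsupp.add_apply, Finsupp.single_eq_same]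

end ZqAux4

/-- for `n = 2`, `∂₁ᴿ z_q^m = [m]_q z₁⋯z_{m-1}` and
`∂₂ᴿ z_q^m = i [m]_q z₁⋯z_{m-1}`. -/
theorem right_derivatives_of_zq_power (q : ℝ) (hq : 0 < q) (hq1 : q ≠ 1)
    (m : ℕ) (hm : 1 ≤ m) :
    dR q 0 (zProd q 0 m) = qNum q (m : ℤ) • zProd q 1 (m - 1) ∧
    dR q 1 (zProd q 0 m) = (Complex.I * qNum q (m : ℤ)) • zProd q 1 (m - 1) := by
  open ZqAux ZqAux2 ZqAux3 ZqAux4 in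
  have hX : (q : ℂ) ≠ 0 := by
    simp only [ne_eq, Complex.ofReal_eq_zero]; exact ne_of_gt hq
  obtain ⟨m', rfl⟩ : ∃ m', m = m' + 1 := ⟨m - 1, by omega⟩
  have hmc : ((m' + 1 : ℕ) : ℤ) = (m' : ℤ) + 1 := by push_cast; ring
  constructor
  · funext α
    simp only [dR, Pi.smul_apply, smul_eq_mul, Nat.add_sub_cancel]
    rw [highSum_zero]
    rw [zProd_coeff q hq hq1 (m'+1) 0 (α + Finsupp.single 0 1),
      zProd_coeff q hq hq1 m' 1 α]
    rw [add0_apply0, add0_apply1]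
    by_cases h : α 0 + α 1 = m'
    · rw [if_pos (show α 0 + 1 + α 1 = m' + 1 by omega), if_pos h]
      rw [show qNum q ((α 0 : ℤ) + 1) = qNum q ((m' : ℤ) + 1 - α 1) by congr 1; omega]
      rw [hmc]
      have hGA := GA q m' (α 1)
      have h1 : (q:ℂ) ^ ((α 1 : ℤ)) * (q:ℂ) ^ (((0:ℕ):ℤ) * (α 1) + ((α 1).choose 2 : ℤ))
          = (q:ℂ) ^ (((1:ℕ):ℤ) * (α 1) + ((α 1).choose 2 : ℤ)) := by
        rw [← zpow_add₀ hX]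
        congr 1
        push_cast
        ring
      linear_combination (Complex.I ^ (α 1) * qNum q ((m' : ℤ) + 1 - α 1) *
          Gb q (m'+1) (α 1)) * h1 +
        (Complex.I ^ (α 1) * (q:ℂ) ^ (((1:ℕ):ℤ) * (α 1) + ((α 1).choose 2 : ℤ))) * hGA
    · rw [if_neg (by omega), if_neg (by omega)]
      ring
  · funext α
    simp only [dR, Pi.smul_apply, smul_eq_mul, Nat.add_sub_cancel]
    rw [highSum_one]
    simp only [zpow_zero, mul_one]
    rw [zProd_coeff q hq hq1 (m'+1) 0 (α + Finsupp.single 1 1),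
      zProd_coeff q hq hq1 m' 1 α]
    rw [add1_apply0, add1_apply1]
    by_cases h : α 0 + α 1 = m'
    · rw [if_pos (show α 0 + (α 1 + 1) = m' + 1 by omega), if_pos h]
      rw [hmc]
      have hGB := GB q hq hq1 m' (α 1)
      have h1 : (q:ℂ) ^ (((0:ℕ):ℤ) * ((α 1 : ℕ) + 1 : ℕ) + (((α 1) + 1).choose 2 : ℤ))
          = (q:ℂ) ^ (((1:ℕ):ℤ) * (α 1) + ((α 1).choose 2 : ℤ)) := by
        congr 1
        have := qchoose_succ (α 1)
        push_cast [this]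
        ring
      linear_combination (Complex.I ^ ((α 1) + 1) * qNum q ((α 1 : ℤ) + 1) *
          Gb q (m'+1) ((α 1) + 1)) * h1 +
        (Complex.I ^ ((α 1) + 1) * (q:ℂ) ^ (((1:ℕ):ℤ) * (α 1) + ((α 1).choose 2 : ℤ))) * hGB
    · rw [if_neg (by omega), if_neg (by omega)]
      ring
end
end

section
/- In the case n = 2, the polynomials z_q^m = (x₁+ix₂)(x₁+iqx₂)⋯(x₁+iq^{m−1}x₂) and z̄_q^m = (x₁−ix₂)(x₁−iqx₂)⋯(x₁−iq^{m−1}x₂) are q-harmonic: Δ_qᴿ z_q^m = 0 and Δ_qᴿ z̄_q^m = 0, where Δ_qᴿ = q(∂₁ᴿ)² + (∂₂ᴿ)². -/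
noncomputable section

section MyAux

/-- symmetric q-factorial -/
def qfact (q : ℝ) : ℕ → ℂ
  | 0 => 1
  | k+1 => qNum q (k+1) * qfact q k

lemma qfact_succ (q : ℝ) (k : ℕ) : qfact q (k+1) = qNum q (k+1) * qfact q k := rfl

/-- symmetric q-binomial -/
def qbin (q : ℝ) (a b : ℕ) : ℂ := qfact q (a+b) / (qfact q a * qfact q b)

def tri : ℕ → ℕ
  | 0 => 0
  | b+1 => tri b + b

variable {q : ℝ}

lemma hq0C (hq : 0 < q) : (q:ℂ) ≠ 0 := by
  simp only [ne_eq, Complex.ofReal_eq_zero]; exact hq.ne'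

lemma hdenC (hq : 0 < q) (hq1 : q ≠ 1) : (q:ℂ) - (q:ℂ)⁻¹ ≠ 0 := by
  have hr : q - q⁻¹ ≠ 0 := by
    intro h
    have hq0 : q ≠ 0 := hq.ne'
    have h2 : q * q = 1 := by
      have := sub_eq_zero.mp h
      field_simp [hq0] at this
      nlinarith [this]
    have h3 : (q-1)*(q+1) = 0 := by nlinarith
    rcases mul_eq_zero.mp h3 with h4 | h4
    · exact hq1 (by linarith)
    · linarith
  intro h
  apply hr
  have : ((q - q⁻¹ : ℝ) : ℂ) = 0 := by push_cast; exact h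
  exact_mod_cast this

lemma qNum_ne_zero (hq : 0 < q) (hq1 : q ≠ 1) (k : ℤ) (hk : k ≠ 0) : qNum q k ≠ 0 := by
  have hnum : (q:ℂ)^k - (q:ℂ)^(-k) ≠ 0 := by
    intro h
    have hre : q ^ k = q ^ (-k) := by
      have : ((q ^ k - q ^ (-k) : ℝ) : ℂ) = 0 := by push_cast; exact h
      have := (Complex.ofReal_eq_zero).mp this
      linarith [this]
    have := zpow_right_injective₀ hq hq1 hre
    omega
  exact div_ne_zero hnum (hdenC hq hq1)

lemma qfact_ne_zero (hq : 0 < q) (hq1 : q ≠ 1) (k : ℕ) : qfact q k ≠ 0 := by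
  induction k with
  | zero => simp [qfact]
  | succ k ih =>
      rw [qfact_succ]
      exact mul_ne_zero (qNum_ne_zero hq hq1 _ (by positivity)) ih

lemma qNum_add (hq : 0 < q) (x y : ℤ) :
    qNum q (x+y) = (q:ℂ)^y * qNum q x + (q:ℂ)^(-x) * qNum q y := by
  have h0 : (q:ℂ) ≠ 0 := hq0C hq
  simp only [qNum]
  rw [← mul_div_assoc, ← mul_div_assoc, ← add_div]
  congr 1
  rw [neg_add, zpow_add₀ h0, zpow_add₀ h0]
  ring

lemma qbin_zero_right (hq : 0 < q) (hq1 : q ≠ 1) (a : ℕ) : qbin q a 0 = 1 := by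
  simp only [qbin, qfact, Nat.add_zero, mul_one]
  exact div_self (qfact_ne_zero hq hq1 a)

lemma qbin_zero_left (hq : 0 < q) (hq1 : q ≠ 1) (b : ℕ) : qbin q 0 b = 1 := by
  simp only [qbin, qfact, Nat.zero_add, one_mul]
  exact div_self (qfact_ne_zero hq hq1 b)

lemma qbin_pascal (hq : 0 < q) (hq1 : q ≠ 1) (a b : ℕ) :
    qbin q (a+1) (b+1) =
      (q:ℂ)^((b:ℤ)+1) * qbin q a (b+1) + (q:ℂ)^(-((a:ℤ)+1)) * qbin q (a+1) b := by
  have h0 : (q:ℂ) ≠ 0 := hq0C hq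
  have hfa := qfact_ne_zero hq hq1 a
  have hfb := qfact_ne_zero hq hq1 b
  have e1 : a+1+(b+1) = (a+(b+1))+1 := by omega
  have e2 : a+(b+1) = (a+1)+b := by omega
  have key : qNum q (((a+(b+1) : ℕ) : ℤ) + 1)
      = (q:ℂ)^((b:ℤ)+1) * qNum q ((a:ℤ)+1) + (q:ℂ)^(-((a:ℤ)+1)) * qNum q ((b:ℤ)+1) := by
    have harg : ((a+(b+1) : ℕ) : ℤ) + 1 = ((a:ℤ)+1) + ((b:ℤ)+1) := by push_cast; ring
    rw [harg, qNum_add hq]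
  simp only [qbin, e1, qfact_succ, key]
  rw [← e2]
  rw [← mul_div_assoc, ← mul_div_assoc,
    div_add_div _ _
      (by repeat' first
          | exact qfact_ne_zero hq hq1 _
          | exact qNum_ne_zero hq hq1 _ (by positivity)
          | apply mul_ne_zero)
      (by repeat' first
          | exact qfact_ne_zero hq hq1 _
          | exact qNum_ne_zero hq hq1 _ (by positivity)
          | apply mul_ne_zero),
    div_eq_div_iff
      (by repeat' first
          | exact qfact_ne_zero hq hq1 _
          | exact qNum_ne_zero hq hq1 _ (by positivity)
          | apply mul_ne_zero)
      (by repeat' first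
          | exact qfact_ne_zero hq hq1 _
          | exact qNum_ne_zero hq hq1 _ (by positivity)
          | apply mul_ne_zero)]
  ring

lemma qbin_key (hq : 0 < q) (hq1 : q ≠ 1) (a b : ℕ) :
    qNum q ((a:ℤ)+1) * qNum q ((a:ℤ)+2) * qbin q (a+2) b
      = qNum q ((b:ℤ)+1) * qNum q ((b:ℤ)+2) * qbin q a (b+2) := by
  have e1 : a+2+b = a+b+2 := by omega
  have e2 : a+(b+2) = a+b+2 := by omega
  have e3 : a+2 = (a+1)+1 := by omega
  have e4 : b+2 = (b+1)+1 := by omega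
  simp only [qbin, e1, e2, e3, e4, qfact_succ]
  have c1 : ((a+1 : ℕ) : ℤ) + 1 = (a:ℤ)+2 := by push_cast; ring
  have c2 : ((b+1 : ℕ) : ℤ) + 1 = (b:ℤ)+2 := by push_cast; ring
  rw [c1, c2]
  rw [← mul_div_assoc, ← mul_div_assoc,
    div_eq_div_iff
      (by repeat' first
          | exact qfact_ne_zero hq hq1 _
          | exact qNum_ne_zero hq hq1 _ (by positivity)
          | apply mul_ne_zero)
      (by repeat' first
          | exact qfact_ne_zero hq hq1 _
          | exact qNum_ne_zero hq hq1 _ (by positivity)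
          | apply mul_ne_zero)]
  ring

end MyAux

section MyAux2

variable {q : ℝ}

/-- closed-form coefficients of the z-products -/
def czc (q : ℝ) (ζ : ℂ) (m : ℕ) : QPoly 2 :=
  fun α => if α 0 + α 1 = m then ζ^(α 1) * (q:ℂ)^(tri (α 1)) * qbin q (α 0) (α 1) else 0

lemma qMul_add_smul {n : ℕ} (q : ℝ) (f g h : QPoly n) (c : ℂ) (α : QIdx n) :
    qMul q (f + c • g) h α = qMul q f h α + c * qMul q g h α := by
  simp only [qMul, Pi.add_apply, Pi.smul_apply, smul_eq_mul, Finset.mul_sum,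
    ← Finset.sum_add_distrib]
  apply Finset.sum_congr rfl
  intro p _
  ring

lemma qMul_Xvar (q : ℝ) (i : Fin 2) (g : QPoly 2) (α : QIdx 2) :
    qMul q (Xvar i) g α = if α i = 0 then 0 else
      (q:ℂ)^(qExp (Finsupp.single i 1) (α - Finsupp.single i 1)) * g (α - Finsupp.single i 1) := by
  by_cases h : α i = 0
  · rw [if_pos h]
    apply Finset.sum_eq_zero
    intro p hp
    have hmem := Finset.HasAntidiagonal.mem_antidiagonal.mp hp
    have h1 : p.1 ≠ Finsupp.single i 1 := by
      intro he
      have h2 : p.1 i + p.2 i = α i := by rw [← hmem]; simp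
      rw [he] at h2
      simp [Finsupp.single_apply] at h2
      omega
    simp [Xvar, mono, h1]
  · rw [if_neg h]
    have hle : Finsupp.single i 1 ≤ α := by
      rw [Finsupp.le_def]
      intro j
      rcases eq_or_ne j i with rfl | hj
      · simpa [Finsupp.single_apply] using Nat.one_le_iff_ne_zero.mpr h
      · simp [Finsupp.single_apply, hj.symm]
    have hmem : (Finsupp.single i 1, α - Finsupp.single i 1) ∈ Finset.HasAntidiagonal.antidiagonal α :=
      Finset.HasAntidiagonal.mem_antidiagonal.mpr (add_tsub_cancel_of_le hle)
    rw [qMul, Finset.sum_eq_single_of_mem _ hmem]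
    · simp [Xvar, mono]
    · intro p hp hne
      have hmem' := Finset.HasAntidiagonal.mem_antidiagonal.mp hp
      have h1 : p.1 ≠ Finsupp.single i 1 := by
        intro he
        apply hne
        have h2 : p.2 = α - Finsupp.single i 1 := by
          rw [← he]
          exact eq_tsub_of_add_eq (by rw [add_comm]; exact hmem')
        exact Prod.ext_iff.mpr ⟨he, h2⟩
      simp [Xvar, mono, h1]

lemma qExp_single0 (β : QIdx 2) : qExp (Finsupp.single (0 : Fin 2) 1) β = 0 := by
  simp [qExp, Fin.sum_univ_two, Finsupp.single_apply]

lemma qExp_single1 (β : QIdx 2) : qExp (Finsupp.single (1 : Fin 2) 1) β = -(β 0 : ℤ) := by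
  simp [qExp, Fin.sum_univ_two, Finsupp.single_apply]

lemma qMul_X0 (q : ℝ) (g : QPoly 2) (α : QIdx 2) :
    qMul q (Xvar (0 : Fin 2)) g α
      = if α 0 = 0 then 0 else g (α - Finsupp.single 0 1) := by
  rw [qMul_Xvar, qExp_single0]
  simp

lemma qMul_X1 (q : ℝ) (g : QPoly 2) (α : QIdx 2) :
    qMul q (Xvar (1 : Fin 2)) g α
      = if α 1 = 0 then 0 else (q:ℂ)^(-((α 0 : ℕ) : ℤ)) * g (α - Finsupp.single 1 1) := by
  rw [qMul_Xvar, qExp_single1]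
  have : ((α - Finsupp.single (1 : Fin 2) 1 : QIdx 2)) 0 = α 0 := by
    simp [Finsupp.tsub_apply, Finsupp.single_apply]
  rw [this]

end MyAux2

section MyAux3

variable {q : ℝ}

lemma czc_step (hq : 0 < q) (hq1 : q ≠ 1) (ζ : ℂ) (m : ℕ) :
    qMul q (Xvar 0 + ζ • Xvar 1) (czc q (ζ * q) m) = czc q ζ (m+1) := by
  funext α
  rw [qMul_add_smul, qMul_X0, qMul_X1]
  have ha0 : ((α - Finsupp.single (0:Fin 2) 1 : QIdx 2)) 0 = α 0 - 1 := by
    simp [Finsupp.tsub_apply, Finsupp.single_apply]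
  have ha1 : ((α - Finsupp.single (0:Fin 2) 1 : QIdx 2)) 1 = α 1 := by
    simp [Finsupp.tsub_apply, Finsupp.single_apply]
  have hb0 : ((α - Finsupp.single (1:Fin 2) 1 : QIdx 2)) 0 = α 0 := by
    simp [Finsupp.tsub_apply, Finsupp.single_apply]
  have hb1 : ((α - Finsupp.single (1:Fin 2) 1 : QIdx 2)) 1 = α 1 - 1 := by
    simp [Finsupp.tsub_apply, Finsupp.single_apply]
  simp only [czc, ha0, ha1, hb0, hb1]
  generalize α 0 = a
  generalize α 1 = b
  rcases a with _ | a' <;> rcases b with _ | b'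
  · rw [if_pos rfl, if_pos rfl, if_neg (by omega)]
    ring
  · -- a = 0, b = b'+1
    rw [if_pos rfl, if_neg (Nat.succ_ne_zero b')]
    by_cases hm : 0 + (b'+1) = m+1
    · rw [if_pos (by omega : 0 + (b'+1-1) = m), if_pos hm]
      rw [qbin_zero_left hq hq1, qbin_zero_left hq hq1]
      simp only [Nat.cast_zero, neg_zero, zpow_zero, one_mul, mul_one,
        Nat.add_sub_cancel]
      have ht : tri (b'+1) = tri b' + b' := rfl
      rw [ht]
      rw [pow_add]
      ring
    · rw [if_neg (by omega), if_neg (by omega)]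
      ring
  · -- a = a'+1, b = 0
    rw [if_neg (Nat.succ_ne_zero a'), if_pos rfl]
    by_cases hm : (a'+1) + 0 = m+1
    · rw [if_pos (by omega : (a'+1-1) + 0 = m), if_pos hm]
      rw [qbin_zero_right hq hq1, qbin_zero_right hq hq1]
      simp [tri]
    · rw [if_neg (by omega), if_neg (by omega)]
      ring
  · -- a = a'+1, b = b'+1
    rw [if_neg (Nat.succ_ne_zero a'), if_neg (Nat.succ_ne_zero b')]
    by_cases hm : (a'+1) + (b'+1) = m+1
    · rw [if_pos (by omega : (a'+1-1) + (b'+1) = m),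
        if_pos (by omega : (a'+1) + (b'+1-1) = m), if_pos hm]
      simp only [Nat.add_sub_cancel]
      rw [qbin_pascal hq hq1 a' b']
      have hz1 : (q:ℂ)^((b':ℤ)+1) = (q:ℂ)^(b'+1) := by
        rw [← zpow_natCast]; norm_num
      have hz2 : (q:ℂ)^(-(((a'+1:ℕ)):ℤ)) = ((q:ℂ)^(a'+1:ℕ))⁻¹ := by
        rw [zpow_neg, zpow_natCast]
      have hz3 : (q:ℂ)^(-((a':ℤ)+1)) = ((q:ℂ)^(a'+1:ℕ))⁻¹ := by
        rw [zpow_neg, ← zpow_natCast]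
        norm_num
      rw [hz1, hz2, hz3]
      have ht : tri (b'+1) = tri b' + b' := rfl
      rw [ht]
      have hqn : (q:ℂ)^(a'+1:ℕ) ≠ 0 := pow_ne_zero _ (hq0C hq)
      field_simp
      ring
    · rw [if_neg (by omega), if_neg (by omega), if_neg (by omega)]
      ring

lemma zProd_eq (hq : 0 < q) (hq1 : q ≠ 1) (m s : ℕ) :
    zProd q s m = czc q (Complex.I * (q:ℂ)^(s:ℤ)) m := by
  induction m generalizing s with
  | zero =>
      funext α
      show qOne α = czc q _ 0 α
      by_cases h : α = 0
      · subst h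
        simp [qOne, czc, qbin_zero_left hq hq1, tri]
      · have h2 : ¬((α 0 : ℕ) + α 1 = 0) := by
          intro hc
          apply h
          ext i
          fin_cases i <;> simp_all <;> omega
        simp [qOne, czc, h, h2]
        exact fun h0 h1 => absurd (by omega : α 0 + α 1 = 0) h2
  | succ m ih =>
      show qMul q (zvar q s) (zProd q (s+1) m) = _
      rw [ih (s+1)]
      have harg : Complex.I * (q:ℂ)^((s+1:ℕ):ℤ) = (Complex.I * (q:ℂ)^(s:ℤ)) * q := by
        push_cast
        rw [zpow_add₀ (hq0C hq), zpow_one, mul_assoc]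
      rw [harg, zvar]
      exact czc_step hq hq1 _ m

lemma zbProd_eq (hq : 0 < q) (hq1 : q ≠ 1) (m s : ℕ) :
    zbProd q s m = czc q (-(Complex.I * (q:ℂ)^(s:ℤ))) m := by
  induction m generalizing s with
  | zero =>
      funext α
      show qOne α = czc q _ 0 α
      by_cases h : α = 0
      · subst h
        simp [qOne, czc, qbin_zero_left hq hq1, tri]
      · have h2 : ¬((α 0 : ℕ) + α 1 = 0) := by
          intro hc
          apply h
          ext i
          fin_cases i <;> simp_all <;> omega
        simp [qOne, czc, h, h2]
        exact fun h0 h1 => absurd (by omega : α 0 + α 1 = 0) h2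
  | succ m ih =>
      show qMul q (zbar q s) (zbProd q (s+1) m) = _
      rw [ih (s+1)]
      have harg : -(Complex.I * (q:ℂ)^((s+1:ℕ):ℤ)) = (-(Complex.I * (q:ℂ)^(s:ℤ))) * q := by
        push_cast
        rw [zpow_add₀ (hq0C hq), zpow_one, neg_mul, mul_assoc]
      rw [harg]
      have hzb : zbar q s = Xvar 0 + (-(Complex.I * (q:ℂ)^(s:ℤ))) • Xvar 1 := by
        rw [zbar, sub_eq_add_neg, ← neg_smul]
      rw [hzb]
      exact czc_step hq hq1 _ m

end MyAux3

section MyAux4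

variable {q : ℝ}

lemma highSum0 (β : QIdx 2) : highSum (0 : Fin 2) β = (β 1 : ℤ) := by
  simp [highSum, Fin.sum_univ_two]

lemma highSum1 (β : QIdx 2) : highSum (1 : Fin 2) β = 0 := by
  simp [highSum, Fin.sum_univ_two]

lemma lap_czc (hq : 0 < q) (hq1 : q ≠ 1) (ζ : ℂ) (hζ : ζ^2 = -1) (m : ℕ) :
    (q : ℂ) • dR q 0 (dR q 0 (czc q ζ m)) + dR q 1 (dR q 1 (czc q ζ m)) = 0 := by
  funext α
  have d00 : ((α + Finsupp.single (0:Fin 2) 1 + Finsupp.single (0:Fin 2) 1 : QIdx 2)) 0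
      = α 0 + 2 := by simp
  have d01 : ((α + Finsupp.single (0:Fin 2) 1 + Finsupp.single (0:Fin 2) 1 : QIdx 2)) 1
      = α 1 := by simp [Finsupp.single_apply]
  have d10 : ((α + Finsupp.single (1:Fin 2) 1 + Finsupp.single (1:Fin 2) 1 : QIdx 2)) 0
      = α 0 := by simp [Finsupp.single_apply]
  have d11 : ((α + Finsupp.single (1:Fin 2) 1 + Finsupp.single (1:Fin 2) 1 : QIdx 2)) 1
      = α 1 + 2 := by simp
  have c00 : ((α + Finsupp.single (0:Fin 2) 1 : QIdx 2)) 0 = α 0 + 1 := by simp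
  have c01 : ((α + Finsupp.single (0:Fin 2) 1 : QIdx 2)) 1 = α 1 := by
    simp [Finsupp.single_apply]
  have c10 : ((α + Finsupp.single (1:Fin 2) 1 : QIdx 2)) 0 = α 0 := by
    simp [Finsupp.single_apply]
  have c11 : ((α + Finsupp.single (1:Fin 2) 1 : QIdx 2)) 1 = α 1 + 1 := by simp
  simp only [dR, Pi.add_apply, Pi.smul_apply, smul_eq_mul, Pi.zero_apply,
    highSum0, highSum1, czc, c00, c01, c10, c11, d00, d01, d10, d11]
  by_cases hm : α 0 + α 1 + 2 = m
  · rw [if_pos (by omega), if_pos (by omega)]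
    have key := qbin_key hq hq1 (α 0) (α 1)
    have e1 : ((α 0 + 1 : ℕ) : ℤ) + 1 = ((α 0 : ℕ) : ℤ) + 2 := by push_cast; ring
    have e2 : ((α 1 + 1 : ℕ) : ℤ) + 1 = ((α 1 : ℕ) : ℤ) + 2 := by push_cast; ring
    rw [e1, e2]
    have e3 : ζ ^ (α 1 + 2) = -ζ ^ (α 1) := by
      rw [pow_add, hζ]
      ring
    rw [e3]
    have e4 : tri (α 1 + 2) = tri (α 1) + (α 1) + (α 1 + 1) := rfl
    rw [e4]
    simp only [zpow_natCast, zpow_zero, pow_add]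
    linear_combination
      (ζ ^ (α 1) * (q:ℂ)^(tri (α 1)) * (q:ℂ)^(α 1) * (q:ℂ)^(α 1) * (q:ℂ)) * key
  · rw [if_neg (by omega), if_neg (by omega)]
    ring

end MyAux4

/-- for `n = 2` the polynomials `z_q^m` and `z̄_q^m` are q-harmonic:
`Δ_qᴿ z_q^m = 0 = Δ_qᴿ z̄_q^m`, with `Δ_qᴿ = q(∂₁ᴿ)² + (∂₂ᴿ)²`. -/
theorem zq_powers_are_q_harmonic (q : ℝ) (hq : 0 < q) (hq1 : q ≠ 1) (m : ℕ) :
    (q : ℂ) • dR q 0 (dR q 0 (zProd q 0 m)) + dR q 1 (dR q 1 (zProd q 0 m)) = 0 ∧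
    (q : ℂ) • dR q 0 (dR q 0 (zbProd q 0 m)) + dR q 1 (dR q 1 (zbProd q 0 m)) = 0 := by
  constructor
  · rw [zProd_eq hq hq1 m 0]
    have h0 : Complex.I * (q:ℂ)^((0:ℕ):ℤ) = Complex.I := by norm_num
    rw [h0]
    exact lap_czc hq hq1 Complex.I Complex.I_sq m
  · rw [zbProd_eq hq hq1 m 0]
    have h0 : -(Complex.I * (q:ℂ)^((0:ℕ):ℤ)) = -Complex.I := by norm_num
    rw [h0]
    exact lap_czc hq hq1 (-Complex.I) (by rw [neg_sq, Complex.I_sq]) m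
end
end

section
/- In the q-Clifford algebra Cl_{0,n}^q with generators satisfying eⱼ² = −1 and eᵢeⱼ = −q eⱼeᵢ for i < j, the q-Dirac operator 𝔇_qᴿ = Σᵢ √q^{n−i} eᵢ ∂ᵢᴿ satisfies 𝔇_qᴿ 𝔇_qᴿ = −Δ_qᴿ, where Δ_qᴿ = Σᵢ q^{n−i}(∂ᵢᴿ)². -/
noncomputable section

/-- The right partial q-difference operator on Clifford-algebra-valued polynomials. -/
def dRC {n : ℕ} {C : Type*} [Ring C] [Algebra ℂ C] (q : ℝ) (i : Fin n)
    (f : QIdx n → C) : QIdx n → C :=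
  fun α => (qNum q (α i + 1) * (q : ℂ) ^ highSum i α) • f (α + Finsupp.single i 1)

/-- The left partial q-difference operator on Clifford-algebra-valued polynomials. -/
def dLC {n : ℕ} {C : Type*} [Ring C] [Algebra ℂ C] (q : ℝ) (i : Fin n)
    (f : QIdx n → C) : QIdx n → C :=
  fun α => (qNum q (α i + 1) * (q : ℂ) ^ lowSum i α) • f (α + Finsupp.single i 1)

/-- Left multiplication by `xᵢ` on Clifford-algebra-valued polynomials. -/
def xLC {n : ℕ} {C : Type*} [Ring C] [Algebra ℂ C] (q : ℝ) (i : Fin n)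
    (f : QIdx n → C) : QIdx n → C :=
  fun α => if α i = 0 then 0 else
    (q : ℂ) ^ (-(lowSum i α)) • f (α - Finsupp.single i 1)

/-- The dilation `γᵢ` on Clifford-algebra-valued polynomials. -/
def gamC {n : ℕ} {C : Type*} [Ring C] [Algebra ℂ C] (q : ℝ) (i : Fin n)
    (f : QIdx n → C) : QIdx n → C :=
  fun α => (q : ℂ) ^ (α i : ℤ) • f α

/-- The inverse dilation `γᵢ⁻¹` on Clifford-algebra-valued polynomials. -/
def gamInvC {n : ℕ} {C : Type*} [Ring C] [Algebra ℂ C] (q : ℝ) (i : Fin n)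
    (f : QIdx n → C) : QIdx n → C :=
  fun α => (q : ℂ) ^ (-(α i : ℤ)) • f α

/-- q-commutative multiplication of Clifford-algebra-valued polynomials (the
variables q-commute among themselves and commute with the Clifford generators). -/
def qMulC {n : ℕ} {C : Type*} [Ring C] [Algebra ℂ C] (q : ℝ)
    (f g : QIdx n → C) : QIdx n → C :=
  fun α => ∑ p ∈ Finset.HasAntidiagonal.antidiagonal α, (q : ℂ) ^ qExp p.1 p.2 • (f p.1 * g p.2)

/-- The variable `xᵢ` as a Clifford-algebra-valued polynomial. -/
def XvarC {n : ℕ} (C : Type*) [Ring C] [Algebra ℂ C] (i : Fin n) : QIdx n → C :=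
  fun α => if α = Finsupp.single i 1 then 1 else 0

/-- The q-Dirac operator `𝔇_qᴿ = ∑ᵢ √q^{n-i} eᵢ ∂ᵢᴿ`. -/
def DiracR {n : ℕ} {C : Type*} [Ring C] [Algebra ℂ C] (q : ℝ) (e : Fin n → C)
    (f : QIdx n → C) : QIdx n → C :=
  fun α => ∑ i : Fin n, (sqC q) ^ ((n : ℤ) - 1 - ((i : ℕ) : ℤ)) • (e i * dRC q i f α)

/-- The q-Laplacian `Δ_qᴿ = ∑ᵢ q^{n-i} (∂ᵢᴿ)²` on Clifford-algebra-valued polynomials. -/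
def qLapC {n : ℕ} {C : Type*} [Ring C] [Algebra ℂ C] (q : ℝ)
    (f : QIdx n → C) : QIdx n → C :=
  fun α => ∑ i : Fin n, (q : ℂ) ^ ((n : ℤ) - 1 - ((i : ℕ) : ℤ)) • dRC q i (dRC q i f) α


section Aux

lemma highSum_add_single {n : ℕ} (j i : Fin n) (α : QIdx n) :
    highSum j (α + Finsupp.single i 1) = highSum j α + (if j < i then 1 else 0) := by
  unfold highSum
  have h1 : ∀ k : Fin n,
      (if j < k then (((α + Finsupp.single i 1 : QIdx n) k : ℕ) : ℤ) else 0)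
      = (if j < k then ((α k : ℕ) : ℤ) else 0)
        + (if j < k then (if i = k then (1:ℤ) else 0) else 0) := by
    intro k
    simp only [Finsupp.add_apply, Finsupp.single_apply]
    split_ifs <;> push_cast <;> ring
  rw [Finset.sum_congr rfl (fun k _ => h1 k), Finset.sum_add_distrib]
  congr 1
  have h2 : ∀ k : Fin n, (if j < k then (if i = k then (1:ℤ) else 0) else 0)
      = (if i = k then (if j < i then (1:ℤ) else 0) else 0) := by
    intro k; split_ifs <;> simp_all <;> omega
  rw [Finset.sum_congr rfl (fun k _ => h2 k), Finset.sum_ite_eq]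
  simp

lemma apply_add_single_ne {n : ℕ} {j i : Fin n} (h : i ≠ j) (α : QIdx n) :
    (α + Finsupp.single i 1 : QIdx n) j = α j := by
  simp [Finsupp.add_apply, Finsupp.single_apply, h]

lemma sum_sum_cancel {M : Type*} [AddCommGroup M] [Module ℂ M] {n : ℕ}
    (T : Fin n → Fin n → M) (h : ∀ i j, i ≠ j → T i j + T j i = 0) :
    ∑ i, ∑ j, T i j = ∑ i, T i i := by
  classical
  have h1 : ∀ i : Fin n, i ∈ Finset.univ → ∑ j, T i j
      = T i i + ∑ j ∈ Finset.univ.erase i, T i j := by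
    intro i _
    rw [Finset.add_sum_erase _ _ (Finset.mem_univ i)]
  rw [Finset.sum_congr rfl h1, Finset.sum_add_distrib]
  have hsym : (∑ i, ∑ j ∈ Finset.univ.erase i, T i j)
      = ∑ i, ∑ j ∈ Finset.univ.erase i, T j i := by
    refine Finset.sum_comm' ?_
    intro x y
    constructor
    · rintro ⟨-, hy⟩
      exact ⟨Finset.mem_erase.2 ⟨(Finset.mem_erase.1 hy).1.symm, Finset.mem_univ _⟩,
        Finset.mem_univ _⟩
    · rintro ⟨hx, -⟩
      exact ⟨Finset.mem_univ _,
        Finset.mem_erase.2 ⟨(Finset.mem_erase.1 hx).1.symm, Finset.mem_univ _⟩⟩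
  have h2 : (∑ i, ∑ j ∈ Finset.univ.erase i, T i j)
      + (∑ i, ∑ j ∈ Finset.univ.erase i, T i j) = 0 := by
    nth_rewrite 2 [hsym]
    rw [← Finset.sum_add_distrib]
    refine Finset.sum_eq_zero fun i _ => ?_
    rw [← Finset.sum_add_distrib]
    refine Finset.sum_eq_zero fun j hj => ?_
    exact h i j (Finset.mem_erase.1 hj).1.symm
  have h3 : (∑ i, ∑ j ∈ Finset.univ.erase i, T i j) = 0 := by
    have h4 : (2 : ℂ) • (∑ i, ∑ j ∈ Finset.univ.erase i, T i j) = 0 := by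
      rw [two_smul]; exact h2
    have := congrArg (fun x => (2 : ℂ)⁻¹ • x) h4
    simpa [smul_smul] using this
  rw [h3, add_zero]

end Aux

/-- in the q-Clifford algebra `Cl_{0,n}^q` (with `eⱼ² = -1` and
`eᵢeⱼ = -q eⱼeᵢ` for `i < j`), the q-Dirac operator squares to minus the q-Laplacian. -/
theorem qDirac_squares_to_minus_qLaplacian (n : ℕ) (q : ℝ) (hq : 0 < q) (hq1 : q ≠ 1)
    (C : Type*) [Ring C] [Algebra ℂ C] (e : Fin n → C)
    (he1 : ∀ j, e j ^ 2 = -1)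
    (he2 : ∀ i j : Fin n, i < j → e i * e j = -((q : ℂ) • (e j * e i))) :
    ∀ f : QIdx n → C, DiracR q e (DiracR q e f) = -(qLapC q f) := by
  intro f
  funext α
  classical
  have hs : sqC q ≠ 0 := by
    simp [sqC, Complex.ofReal_ne_zero, Real.sqrt_ne_zero', hq.le, hq.ne']
  have hq0 : (q : ℂ) ≠ 0 := by exact_mod_cast hq.ne'
  have hsq : (sqC q) * (sqC q) = (q : ℂ) := by
    simp [sqC, ← Complex.ofReal_mul, Real.mul_self_sqrt hq.le]
  set c : Fin n → ℂ := fun i => (sqC q) ^ ((n : ℤ) - 1 - ((i : ℕ) : ℤ)) with hc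
  set s : Fin n → QIdx n → ℂ :=
    fun i β => qNum q (β i + 1) * (q : ℂ) ^ highSum i β with hsdef
  set T : Fin n → Fin n → C := fun i j =>
    (c i * c j * s i α * s j (α + Finsupp.single i 1)) •
      (e i * e j * f (α + Finsupp.single i 1 + Finsupp.single j 1)) with hT
  have hL : DiracR q e (DiracR q e f) α = ∑ i, ∑ j, T i j := by
    simp only [DiracR, dRC, Finset.smul_sum, Finset.mul_sum, smul_smul, mul_smul_comm, hT,
      hc, hsdef]
    refine Finset.sum_congr rfl fun i _ => Finset.sum_congr rfl fun j _ => ?_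
    rw [mul_assoc (e i)]
    congr 1
    ring
  rw [hL, sum_sum_cancel]
  · simp only [qLapC, dRC, Pi.neg_apply, hT, smul_smul]
    rw [← Finset.sum_neg_distrib]
    refine Finset.sum_congr rfl fun i _ => ?_
    have hee : e i * e i = -1 := by rw [← sq]; exact he1 i
    have hcc : c i * c i = (q : ℂ) ^ ((n : ℤ) - 1 - ((i : ℕ) : ℤ)) := by
      rw [hc, ← zpow_add₀ hs, ← hsq, mul_zpow, ← zpow_add₀ hs]
    rw [hee, neg_one_mul, smul_neg, ← neg_smul, ← neg_smul]
    congr 1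
    simp only [hsdef, ← hcc]
    ring
  · intro i j hij
    rcases hij.lt_or_gt with h | h
    · -- i < j
      have h1 : s j (α + Finsupp.single i 1) = s j α := by
        rw [hsdef]
        simp only [apply_add_single_ne h.ne, highSum_add_single]
        rw [if_neg (not_lt.2 h.le)]
        simp
      have h2 : s i (α + Finsupp.single j 1) = (q : ℂ) * s i α := by
        rw [hsdef]
        simp only [apply_add_single_ne h.ne', highSum_add_single]
        rw [if_pos h, zpow_add₀ hq0, zpow_one]
        ring
      have h3 : α + Finsupp.single i 1 + Finsupp.single j 1
          = α + Finsupp.single j 1 + Finsupp.single i 1 := by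
        rw [add_assoc, add_assoc, add_comm (Finsupp.single i 1)]
      rw [hT]
      simp only [h1, h2, h3, he2 i j h]
      rw [neg_mul, smul_mul_assoc, smul_neg, smul_smul, ← neg_smul, ← add_smul]
      convert zero_smul ℂ _ using 2
      ring
    · -- j < i
      have h1 : s i (α + Finsupp.single j 1) = s i α := by
        rw [hsdef]
        simp only [apply_add_single_ne h.ne, highSum_add_single]
        rw [if_neg (not_lt.2 h.le)]
        simp
      have h2 : s j (α + Finsupp.single i 1) = (q : ℂ) * s j α := by
        rw [hsdef]
        simp only [apply_add_single_ne h.ne', highSum_add_single]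
        rw [if_pos h, zpow_add₀ hq0, zpow_one]
        ring
      have h3 : α + Finsupp.single i 1 + Finsupp.single j 1
          = α + Finsupp.single j 1 + Finsupp.single i 1 := by
        rw [add_assoc, add_assoc, add_comm (Finsupp.single i 1)]
      rw [hT]
      simp only [h1, h2, h3, he2 j i h]
      rw [neg_mul, smul_mul_assoc, smul_neg, smul_smul, ← neg_smul, ← add_smul]
      convert zero_smul ℂ _ using 2
      ring
end
end

section
/- With respect to the q-Fischer inner product, the monomials are orthogonal and ⟨xᵅ, xᵅ⟩ₖ = q^{Σ_{i<j} αᵢαⱼ} [α]_q!, where [α]_q! = [α₁]_q!⋯[αₙ]_q!; and ⟨xᵅ, xᵝ⟩ₖ = 0 for α ≠ β with |α| = |β| = k. -/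
noncomputable section

/-- For a multi-index `α`, the operator `p(∂ₙᴿ,…,∂₁ᴿ) = (∂ₙᴿ)^{αₙ}⋯(∂₁ᴿ)^{α₁}`
for `p = x^α`, i.e. the derivatives applied in the reversed order
(`(∂₁ᴿ)^{α₁}` acting first). -/
def Dmulti {n : ℕ} (q : ℝ) (α : QIdx n) (f : QPoly n) : QPoly n :=
  (List.finRange n).foldl (fun g i => (dR q i)^[α i] g) f

/-- The q-factorial `[m]_q! = [1]_q [2]_q ⋯ [m]_q`. -/
def qFac (q : ℝ) (m : ℕ) : ℂ := ∏ l ∈ Finset.range m, qNum q ((l : ℤ) + 1)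

/-- `[α]_q! = [α₁]_q! ⋯ [αₙ]_q!`. -/
def qFacMulti {n : ℕ} (q : ℝ) (α : QIdx n) : ℂ := ∏ i : Fin n, qFac q (α i)

/-- `∑_{i<j} αᵢαⱼ`. -/
def crossExp {n : ℕ} (α : QIdx n) : ℤ :=
  ∑ i : Fin n, ∑ j : Fin n, if i < j then (α i : ℤ) * (α j : ℤ) else 0

section Aux

variable {n : ℕ}

lemma highSum_add (i : Fin n) (γ δ : QIdx n) :
    highSum i (γ + δ) = highSum i γ + highSum i δ := by
  unfold highSum
  rw [← Finset.sum_add_distrib]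
  refine Finset.sum_congr rfl fun j _ => ?_
  by_cases h : i < j <;> simp [h]

lemma highSum_single (i i' : Fin n) (c : ℕ) :
    highSum i (Finsupp.single i' c) = if i < i' then (c : ℤ) else 0 := by
  unfold highSum
  rw [Finset.sum_eq_single i']
  · simp [Finsupp.single_apply]
  · intro j _ hj
    simp [Finsupp.single_apply, Ne.symm hj]
  · simp

lemma iter_dR (q : ℝ) (hq0 : (q : ℂ) ≠ 0) (i : Fin n) (m : ℕ) (f : QPoly n) (γ : QIdx n) :
    (dR q i)^[m] f γ = (q : ℂ) ^ ((m : ℤ) * highSum i γ) *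
      (∏ l ∈ Finset.range m, qNum q ((γ i : ℤ) + l + 1)) * f (γ + Finsupp.single i m) := by
  induction m generalizing γ with
  | zero => simp
  | succ m ih =>
    rw [Function.iterate_succ_apply']
    show qNum q (γ i + 1) * (q : ℂ) ^ highSum i γ * ((dR q i)^[m] f (γ + Finsupp.single i 1)) = _
    rw [ih]
    have h1 : highSum i (γ + Finsupp.single i 1) = highSum i γ := by
      rw [highSum_add, highSum_single]; simp
    have h2 : (γ + Finsupp.single i 1 : QIdx n) i = γ i + 1 := by
      simp
    have h3 : γ + Finsupp.single i 1 + Finsupp.single i m = γ + Finsupp.single i (m + 1) := by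
      rw [add_assoc, ← Finsupp.single_add, Nat.add_comm]
    rw [h1, h2, h3]
    have hprod : ∏ l ∈ Finset.range (m + 1), qNum q ((γ i : ℤ) + l + 1)
        = qNum q ((γ i : ℤ) + 1) * ∏ l ∈ Finset.range m, qNum q ((γ i : ℤ) + 1 + l + 1) := by
      rw [Finset.prod_range_succ', mul_comm]
      congr 1
      · refine Finset.prod_congr rfl fun x _ => ?_
        congr 1
        push_cast
        ring
    push_cast
    rw [hprod]
    have hzp : (q : ℂ) ^ (((m : ℤ) + 1) * highSum i γ)
        = (q : ℂ) ^ highSum i γ * (q : ℂ) ^ ((m : ℤ) * highSum i γ) := by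
      rw [add_mul, one_mul, zpow_add₀ hq0, mul_comm]
    rw [hzp]
    ring

def Eexp {n : ℕ} (α : QIdx n) (L : List (Fin n)) (γ : QIdx n) : ℤ :=
  (L.map (fun i => (α i : ℤ) * (highSum i γ +
    ((L.filter (fun j => decide (i < j))).map (fun j => (α j : ℤ))).sum))).sum

lemma fold_eval {n : ℕ} (q : ℝ) (hq0 : (q : ℂ) ≠ 0) (α : QIdx n) (f : QPoly n)
    (L : List (Fin n)) (hL : L.Pairwise (· < ·)) :
    ∀ γ : QIdx n, (∀ i ∈ L, γ i = 0) →
    L.foldl (fun g i => (dR q i)^[α i] g) f γ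
      = (q : ℂ) ^ (Eexp α L γ) * (L.map (fun i => qFac q (α i))).prod
        * f (γ + (L.map (fun i => Finsupp.single i (α i))).sum) := by
  induction L using List.reverseRecOn with
  | nil => intro γ _; simp [Eexp]
  | append_singleton L i0 ih =>
    intro γ hγ
    rw [List.pairwise_append] at hL
    have hLp : L.Pairwise (· < ·) := hL.1
    have hlt : ∀ i ∈ L, i < i0 := fun i hi => hL.2.2 i hi i0 (by simp)
    have hγi0 : γ i0 = 0 := hγ i0 (by simp)
    set γ' : QIdx n := γ + Finsupp.single i0 (α i0) with hγ'def
    have hγ' : ∀ i ∈ L, γ' i = 0 := by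
      intro i hi
      have : i ≠ i0 := ne_of_lt (hlt i hi)
      simp [hγ'def, Finsupp.single_apply, Ne.symm this, hγ i (by simp [hi])]
    rw [List.foldl_append]
    show (dR q i0)^[α i0] (L.foldl (fun g i => (dR q i)^[α i] g) f) γ = _
    rw [iter_dR q hq0, ih hLp γ' hγ']
    have hfac : (∏ l ∈ Finset.range (α i0), qNum q ((γ i0 : ℤ) + l + 1)) = qFac q (α i0) := by
      rw [hγi0]
      unfold qFac
      refine Finset.prod_congr rfl fun l _ => ?_
      norm_num
    -- points agree
    have hpt : γ' + (L.map (fun i => Finsupp.single i (α i))).sum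
        = γ + ((L ++ [i0]).map (fun i => Finsupp.single i (α i))).sum := by
      rw [List.map_append, List.sum_append]
      simp [hγ'def]
      abel
    -- exponents
    have hexp : Eexp α (L ++ [i0]) γ = (α i0 : ℤ) * highSum i0 γ + Eexp α L γ' := by
      unfold Eexp
      rw [List.map_append, List.sum_append]
      have hfil0 : L.filter (fun j => decide (i0 < j)) = [] := by
        rw [List.filter_eq_nil_iff]
        intro j hj
        simp [not_lt_of_gt (hlt j hj)]
      have hmapeq : L.map (fun i => (α i : ℤ) * (highSum i γ +
            (((L ++ [i0]).filter (fun j => decide (i < j))).map (fun j => (α j : ℤ))).sum))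
          = L.map (fun i => (α i : ℤ) * (highSum i γ' +
            ((L.filter (fun j => decide (i < j))).map (fun j => (α j : ℤ))).sum)) := by
        refine List.map_congr_left fun i hi => ?_
        have hii0 : i < i0 := hlt i hi
        have hfil : (L ++ [i0]).filter (fun j => decide (i < j))
            = L.filter (fun j => decide (i < j)) ++ [i0] := by
          rw [List.filter_append]
          simp [hii0]
        have hhs : highSum i γ' = highSum i γ + (α i0 : ℤ) := by
          rw [hγ'def, highSum_add, highSum_single, if_pos hii0]
        rw [hfil, List.map_append, List.sum_append, hhs]
        simp only [List.map_cons, List.map_nil, List.sum_cons, List.sum_nil, add_zero]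
        ring
      rw [hmapeq]
      simp [hfil0]
      ring
    rw [hexp, hpt, zpow_add₀ hq0]
    simp only [List.map_append, List.prod_append, List.map_cons, List.map_nil,
      List.prod_cons, List.prod_nil, hfac]
    ring

lemma filter_map_sum {X : Type*} (p : X → Prop) [DecidablePred p] (f : X → ℤ) (L : List X) :
    ((L.filter (fun x => decide (p x))).map f).sum
      = (L.map (fun x => if p x then f x else 0)).sum := by
  induction L with
  | nil => simp
  | cons a L ih => by_cases h : p a <;> simp [h, ih]

lemma key_eval {n : ℕ} (q : ℝ) (hq0 : (q : ℂ) ≠ 0) (α δ : QIdx n) :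
    Dmulti q α (fun γ => (starRingEnd ℂ) (mono δ γ)) 0
      = (q : ℂ) ^ crossExp α * qFacMulti q α * (if α = δ then 1 else 0) := by
  have hconj : (fun γ => (starRingEnd ℂ) (mono δ γ)) = mono δ := by
    funext γ; unfold mono; split_ifs <;> simp
  rw [hconj]
  unfold Dmulti
  rw [fold_eval q hq0 α (mono δ) (List.finRange n) (List.pairwise_lt_finRange n) 0 (by simp)]
  have hsum : ((List.finRange n).map (fun i => Finsupp.single i (α i))).sum = α := by
    rw [← Fin.sum_univ_def]
    ext j
    rw [Finsupp.finset_sum_apply]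
    simp [Finsupp.single_apply]
  have hprod : ((List.finRange n).map (fun i => qFac q (α i))).prod = qFacMulti q α := by
    rw [← Fin.prod_univ_def]; rfl
  have hexp : Eexp (n := n) α (List.finRange n) 0 = crossExp α := by
    unfold Eexp crossExp
    rw [← Fin.sum_univ_def]
    refine Finset.sum_congr rfl fun i _ => ?_
    rw [filter_map_sum (fun j => i < j) (fun j => (α j : ℤ)), ← Fin.sum_univ_def]
    have h0 : highSum i (0 : QIdx n) = 0 := by unfold highSum; simp
    rw [h0, zero_add, Finset.mul_sum]
    refine Finset.sum_congr rfl fun j _ => ?_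
    by_cases h : i < j <;> simp [h]
  rw [hsum, hprod, hexp, zero_add]
  unfold mono
  by_cases h : α = δ <;> simp [h, eq_comm]

end Aux

/-- with respect to the q-Fischer inner product
`⟨p₁,p₂⟩ₖ = p₁(∂ₙᴿ,…,∂₁ᴿ)(p₂)*|_{x=0}`, the monomials are orthogonal with
`⟨x^α, x^α⟩ₖ = q^{∑_{i<j} αᵢαⱼ} [α]_q!` and `⟨x^α, x^β⟩ₖ = 0` for `α ≠ β`. -/



theorem monomials_fischer_orthogonal (n : ℕ) (q : ℝ) (hq : 0 < q) (hq1 : q ≠ 1)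
    (k : ℕ) (α β : QIdx n) (hα : ∑ i, α i = k) (hβ : ∑ i, β i = k) :
    Dmulti q α (fun γ => (starRingEnd ℂ) (mono α γ)) 0
        = (q : ℂ) ^ crossExp α * qFacMulti q α ∧
    (α ≠ β → Dmulti q α (fun γ => (starRingEnd ℂ) (mono β γ)) 0 = 0) := by
  have hq0 : (q : ℂ) ≠ 0 := by
    simpa using ne_of_gt hq
  constructor
  · rw [key_eval q hq0 α α]
    simp
  · intro hne
    rw [key_eval q hq0 α β]
    simp [hne]
end
end
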